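/- arXiv:1109.1102 — 4 statements merged into one kernel-verified Lean document; each statement's English description precedes it below -/
import Mathlib

section
/- Suppose each A_i(t) is diagonal, the Liao-type exponent satisfies χ < 0 for some Δ-sequence {n_s}, and set δ := |χ|·exp(−2γΔT*). If 0 ≤ L < δ, then for every x_0 ∈ ℝ^d, every solution x(t) of the switched quasi-linear system ẋ(t) = A_{u(t)}(t)x(t) + F_{u(t)}(t,x(t)) with x(0) = x_0 satisfies limsup_{t→∞} (1/t)·log‖x(t)‖ ≤ χ + (L/δ)|χ| < 0; in particular the system is globally asymptotically exponentially stable. -/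
/-- Matrix acting on `EuclideanSpace ℝ (Fin d)` by matrix-vector multiplication. -/
noncomputable def mulVecE {d : ℕ} (M : Matrix (Fin d) (Fin d) ℝ)
    (v : EuclideanSpace ℝ (Fin d)) : EuclideanSpace ℝ (Fin d) :=
  (EuclideanSpace.equiv (Fin d) ℝ).symm (M.mulVec (EuclideanSpace.equiv (Fin d) ℝ v))


open Set MeasureTheory intervalIntegral Filter

/-- FTC allowing finitely many exceptional points (the switching times). -/
lemma ftc_paste {E : Type*} [NormedAddCommGroup E] [NormedSpace ℝ E] [CompleteSpace E]
    (τ : ℕ → ℝ) (hτmono : StrictMono τ) :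
    ∀ (m : ℕ) (g D : ℝ → E) (p q : ℝ), p ≤ q →
    ContinuousOn g (Icc p q) →
    (∀ t ∈ Ioo p q, (∀ n, t ≠ τ n) → HasDerivAt g (D t) t) →
    IntervalIntegrable D volume p q →
    (∀ n, τ n ∈ Ioo p q → n < m) →
    ∫ t in p..q, D t = g q - g p := by
  intro m
  induction m with
  | zero =>
    intro g D p q hpq hcont hderiv hint hm
    refine integral_eq_sub_of_hasDeriv_right_of_le hpq hcont (fun t ht => ?_) hint
    have hne : ∀ n, t ≠ τ n := by
      intro n hn
      exact Nat.not_lt_zero n (hm n (hn ▸ ht))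
    exact (hderiv t ht hne).hasDerivWithinAt
  | succ m IH =>
    intro g D p q hpq hcont hderiv hint hm
    by_cases hc : τ m ∈ Ioo p q
    · have h1 : ∫ t in p..(τ m), D t = g (τ m) - g p := by
        refine IH g D p (τ m) hc.1.le (hcont.mono (Icc_subset_Icc le_rfl hc.2.le))
          (fun t ht hne => hderiv t ⟨ht.1, ht.2.trans hc.2⟩ hne)
          (hint.mono_set ?_) (fun n hn => ?_)
        · rw [uIcc_of_le hc.1.le, uIcc_of_le hpq]
          exact Icc_subset_Icc le_rfl hc.2.le
        · have : τ n < τ m := hn.2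
          exact hτmono.lt_iff_lt.mp this
      have h2 : ∫ t in (τ m)..q, D t = g q - g (τ m) := by
        refine IH g D (τ m) q hc.2.le (hcont.mono (Icc_subset_Icc hc.1.le le_rfl))
          (fun t ht hne => hderiv t ⟨hc.1.trans ht.1, ht.2⟩ hne)
          (hint.mono_set ?_) (fun n hn => ?_)
        · rw [uIcc_of_le hc.2.le, uIcc_of_le hpq]
          exact Icc_subset_Icc hc.1.le le_rfl
        · exfalso
          have h3 : n < m + 1 := hm n ⟨hc.1.trans hn.1, hn.2⟩
          have h4 : τ m < τ n := hn.1
          have : m < n := hτmono.lt_iff_lt.mp h4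
          omega
      have hadd := integral_add_adjacent_intervals
        (hint.mono_set (by rw [uIcc_of_le hc.1.le, uIcc_of_le hpq]; exact Icc_subset_Icc le_rfl hc.2.le))
        (hint.mono_set (by rw [uIcc_of_le hc.2.le, uIcc_of_le hpq]; exact Icc_subset_Icc hc.1.le le_rfl))
      rw [← hadd, h1, h2]
      abel
    · refine IH g D p q hpq hcont hderiv hint (fun n hn => ?_)
      have h3 : n < m + 1 := hm n hn
      have : n ≠ m := fun h => hc (h ▸ hn)
      omega

/-- forward integral Grönwall inequality -/
lemma gronwall_fwd {v : ℝ → ℝ} {C M s₀ t₁ : ℝ} (hM : 0 ≤ M) (hst : s₀ ≤ t₁)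
    (hv : ContinuousOn v (Icc s₀ t₁))
    (hineq : ∀ r ∈ Icc s₀ t₁, v r ≤ C + M * ∫ u in s₀..r, v u) :
    v t₁ ≤ C * Real.exp (M * (t₁ - s₀)) := by
  set W : ℝ → ℝ := fun r => C + M * ∫ u in s₀..r, v u with hW
  set g : ℝ → ℝ := fun r => W r * Real.exp (-M * (r - s₀)) with hg
  have hvint : ∀ r ∈ Icc s₀ t₁, IntervalIntegrable v volume s₀ r := by
    intro r hr
    exact (hv.mono (by rw [uIcc_of_le hr.1]; exact Icc_subset_Icc le_rfl hr.2)).intervalIntegrable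
  have hWcont : ContinuousOn W (Icc s₀ t₁) := by
    apply continuousOn_const.add (continuousOn_const.mul ?_)
    have h := intervalIntegral.continuousOn_primitive_interval' (μ := volume)
      (hvint t₁ (right_mem_Icc.2 hst)) (by rw [uIcc_of_le hst]; exact left_mem_Icc.2 hst)
    rwa [uIcc_of_le hst] at h
  have hWd : ∀ r ∈ Ioo s₀ t₁, HasDerivAt W (M * v r) r := by
    intro r hr
    have h1 : HasDerivAt (fun r => ∫ u in s₀..r, v u) (v r) r := by
      refine intervalIntegral.integral_hasDerivAt_right (hvint r ⟨hr.1.le, hr.2.le⟩)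
        ⟨Ioo s₀ t₁, Ioo_mem_nhds hr.1 hr.2, ((hv.mono Ioo_subset_Icc_self).aestronglyMeasurable measurableSet_Ioo)⟩ ?_
      exact (hv.mono Ioo_subset_Icc_self).continuousAt (Ioo_mem_nhds hr.1 hr.2)
    exact (h1.const_mul M).const_add C
  have hgd : ∀ r ∈ Ioo s₀ t₁, HasDerivAt g
      (M * v r * Real.exp (-M * (r - s₀)) + W r * (-M * Real.exp (-M * (r - s₀)))) r := by
    intro r hr
    have he : HasDerivAt (fun r => Real.exp (-M * (r - s₀))) (-M * Real.exp (-M * (r - s₀))) r := by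
      have h2 : HasDerivAt (fun r : ℝ => -M * (r - s₀)) (-M) r := by
        simpa using ((hasDerivAt_id r).sub_const s₀).const_mul (-M)
      simpa [mul_comm, Function.comp_def] using (Real.hasDerivAt_exp (-M * (r - s₀))).comp r h2
    exact (hWd r hr).mul he
  have hgcont : ContinuousOn g (Icc s₀ t₁) :=
    hWcont.mul (Continuous.continuousOn (by fun_prop))
  have hganti : AntitoneOn g (Icc s₀ t₁) := by
    apply antitoneOn_of_deriv_nonpos (convex_Icc s₀ t₁) hgcont
    · intro r hr
      rw [interior_Icc] at hr
      exact ((hgd r hr).differentiableAt).differentiableWithinAt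
    · intro r hr
      rw [interior_Icc] at hr
      rw [(hgd r hr).deriv]
      have h5 : v r ≤ W r := hineq r ⟨hr.1.le, hr.2.le⟩
      have h6 : (0:ℝ) < Real.exp (-M * (r - s₀)) := Real.exp_pos _
      nlinarith [mul_le_mul_of_nonneg_left (mul_le_mul_of_nonneg_right h5 h6.le) hM]
  have h7 : g t₁ ≤ g s₀ := hganti (left_mem_Icc.2 hst) (right_mem_Icc.2 hst) hst
  have h8 : g s₀ = C := by simp [hg, hW]
  have h9 : v t₁ ≤ W t₁ := hineq t₁ (right_mem_Icc.2 hst)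
  have h10 : W t₁ * Real.exp (-M * (t₁ - s₀)) ≤ C := h8 ▸ h7
  have h11 : Real.exp (-M * (t₁ - s₀)) = (Real.exp (M * (t₁ - s₀)))⁻¹ := by
    rw [← Real.exp_neg]; ring_nf
  have h12 : (0:ℝ) < Real.exp (M * (t₁ - s₀)) := Real.exp_pos _
  have h14 : Real.exp (-M * (t₁ - s₀)) * Real.exp (M * (t₁ - s₀)) = 1 := by
    rw [← Real.exp_add]; ring_nf; exact Real.exp_zero
  calc v t₁ ≤ W t₁ := h9
    _ = (W t₁ * Real.exp (-M * (t₁ - s₀))) * Real.exp (M * (t₁ - s₀)) := by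
        rw [mul_assoc, h14, mul_one]
    _ ≤ C * Real.exp (M * (t₁ - s₀)) := mul_le_mul_of_nonneg_right h10 h12.le

/-- backward integral Grönwall inequality -/
lemma gronwall_bwd {v : ℝ → ℝ} {C M s₀ t₁ : ℝ} (hM : 0 ≤ M) (hst : s₀ ≤ t₁)
    (hv : ContinuousOn v (Icc s₀ t₁))
    (hineq : ∀ r ∈ Icc s₀ t₁, v r ≤ C + M * ∫ u in r..t₁, v u) :
    v s₀ ≤ C * Real.exp (M * (t₁ - s₀)) := by
  set W : ℝ → ℝ := fun r => C + M * ∫ u in r..t₁, v u with hW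
  set g : ℝ → ℝ := fun r => W r * Real.exp (-M * (t₁ - r)) with hg
  have hvint : ∀ r ∈ Icc s₀ t₁, IntervalIntegrable v volume r t₁ := by
    intro r hr
    exact (hv.mono (by rw [uIcc_of_le hr.2]; exact Icc_subset_Icc hr.1 le_rfl)).intervalIntegrable
  have hWcont : ContinuousOn W (Icc s₀ t₁) := by
    apply continuousOn_const.add (continuousOn_const.mul ?_)
    have h := intervalIntegral.continuousOn_primitive_interval_left (μ := volume)
      (a := s₀) (b := t₁) (by rw [uIcc_of_le hst]; exact hv.integrableOn_Icc)
    rwa [uIcc_of_le hst] at h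
  have hWd : ∀ r ∈ Ioo s₀ t₁, HasDerivAt W (M * (-v r)) r := by
    intro r hr
    have h1 : HasDerivAt (fun r => ∫ u in r..t₁, v u) (-v r) r := by
      refine intervalIntegral.integral_hasDerivAt_left (hvint r ⟨hr.1.le, hr.2.le⟩)
        ⟨Ioo s₀ t₁, Ioo_mem_nhds hr.1 hr.2, ((hv.mono Ioo_subset_Icc_self).aestronglyMeasurable measurableSet_Ioo)⟩ ?_
      exact (hv.mono Ioo_subset_Icc_self).continuousAt (Ioo_mem_nhds hr.1 hr.2)
    exact (h1.const_mul M).const_add C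
  have hgd : ∀ r ∈ Ioo s₀ t₁, HasDerivAt g
      (M * (-v r) * Real.exp (-M * (t₁ - r)) + W r * (M * Real.exp (-M * (t₁ - r)))) r := by
    intro r hr
    have h2 : HasDerivAt (fun r : ℝ => -M * (t₁ - r)) M r := by
      have := ((hasDerivAt_id r).neg.const_add t₁).const_mul (-M)
      simpa [sub_eq_add_neg] using this
    have he : HasDerivAt (fun r => Real.exp (-M * (t₁ - r))) (M * Real.exp (-M * (t₁ - r))) r := by
      simpa [mul_comm, Function.comp_def] using (Real.hasDerivAt_exp (-M * (t₁ - r))).comp r h2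
    exact (hWd r hr).mul he
  have hgcont : ContinuousOn g (Icc s₀ t₁) :=
    hWcont.mul (Continuous.continuousOn (by fun_prop))
  have hgmono : MonotoneOn g (Icc s₀ t₁) := by
    apply monotoneOn_of_deriv_nonneg (convex_Icc s₀ t₁) hgcont
    · intro r hr
      rw [interior_Icc] at hr
      exact ((hgd r hr).differentiableAt).differentiableWithinAt
    · intro r hr
      rw [interior_Icc] at hr
      rw [(hgd r hr).deriv]
      have h5 : v r ≤ W r := hineq r ⟨hr.1.le, hr.2.le⟩
      have h6 : (0:ℝ) < Real.exp (-M * (t₁ - r)) := Real.exp_pos _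
      nlinarith [mul_le_mul_of_nonneg_left (mul_le_mul_of_nonneg_right h5 h6.le) hM]
  have h7 : g s₀ ≤ g t₁ := hgmono (left_mem_Icc.2 hst) (right_mem_Icc.2 hst) hst
  have h8 : g t₁ = C := by simp [hg, hW]
  have h9 : v s₀ ≤ W s₀ := hineq s₀ (left_mem_Icc.2 hst)
  have h10 : W s₀ * Real.exp (-M * (t₁ - s₀)) ≤ C := h8 ▸ h7
  have h12 : (0:ℝ) < Real.exp (M * (t₁ - s₀)) := Real.exp_pos _
  have h13 : Real.exp (-M * (t₁ - s₀)) * Real.exp (M * (t₁ - s₀)) = 1 := by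
    rw [← Real.exp_add]; ring_nf; exact Real.exp_zero
  calc v s₀ ≤ W s₀ := h9
    _ = (W s₀ * Real.exp (-M * (t₁ - s₀))) * Real.exp (M * (t₁ - s₀)) := by
        rw [mul_assoc, h13, mul_one]
    _ ≤ C * Real.exp (M * (t₁ - s₀)) := mul_le_mul_of_nonneg_right h10 h12.le

lemma eucl_coord_le_norm {d : ℕ} (v : EuclideanSpace ℝ (Fin d)) (j : Fin d) : |v j| ≤ ‖v‖ := by
  rw [EuclideanSpace.norm_eq]
  have h1 : |v j| = Real.sqrt (‖v j‖ ^ 2) := by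
    rw [Real.sqrt_sq_eq_abs]; simp [Real.norm_eq_abs]
  rw [h1]
  apply Real.sqrt_le_sqrt
  exact Finset.single_le_sum (fun i _ => sq_nonneg ‖v i‖) (Finset.mem_univ j)

lemma eucl_diag_norm_le {d : ℕ} (c : Fin d → ℝ) (w : EuclideanSpace ℝ (Fin d)) (M : ℝ)
    (hM : 0 ≤ M) (h : ∀ j, |c j| ≤ M) :
    ‖((EuclideanSpace.equiv (Fin d) ℝ).symm (fun j => c j * w j) : EuclideanSpace ℝ (Fin d))‖
      ≤ M * ‖w‖ := by
  rw [EuclideanSpace.norm_eq, EuclideanSpace.norm_eq]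
  have h1 : ∀ j : Fin d,
      ‖((EuclideanSpace.equiv (Fin d) ℝ).symm (fun j => c j * w j) : EuclideanSpace ℝ (Fin d)) j‖ ^ 2
        ≤ M ^ 2 * ‖w j‖ ^ 2 := by
    intro j
    have : ((EuclideanSpace.equiv (Fin d) ℝ).symm (fun j => c j * w j) : EuclideanSpace ℝ (Fin d)) j
        = c j * w j := rfl
    rw [this]
    simp only [Real.norm_eq_abs]
    rw [abs_mul, mul_pow]
    exact mul_le_mul_of_nonneg_right
      (pow_le_pow_left₀ (abs_nonneg _) (h j) 2) (sq_nonneg _)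
  calc Real.sqrt (∑ j, ‖((EuclideanSpace.equiv (Fin d) ℝ).symm (fun j => c j * w j) : EuclideanSpace ℝ (Fin d)) j‖ ^ 2)
      ≤ Real.sqrt (∑ j, M ^ 2 * ‖w j‖ ^ 2) := by
        apply Real.sqrt_le_sqrt
        exact Finset.sum_le_sum (fun j _ => h1 j)
    _ = M * Real.sqrt (∑ j, ‖w j‖ ^ 2) := by
        rw [← Finset.mul_sum]
        rw [Real.sqrt_mul (sq_nonneg M)]
        rw [Real.sqrt_sq hM]

lemma tau_gap_le (τ : ℕ → ℝ) (Tstar : ℝ) (hτgap : ∀ n : ℕ, τ (n+1) - τ n ≤ Tstar) :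
    ∀ (a b : ℕ), a ≤ b → τ b - τ a ≤ (b - a : ℕ) * Tstar := by
  intro a b hab
  obtain ⟨n, rfl⟩ := Nat.exists_eq_add_of_le hab
  have key : ∀ n : ℕ, τ (a + n) - τ a ≤ n * Tstar := by
    intro n
    induction n with
    | zero => simp
    | succ n IH =>
      have := hτgap (a + n)
      push_cast
      have h1 : a + (n+1) = (a + n) + 1 := by omega
      rw [h1]
      push_cast at IH
      linarith
  have h2 : a + n - a = n := by omega
  rw [h2]
  exact key n

lemma eucl_symm_apply {d : ℕ} (f : Fin d → ℝ) (j : Fin d) :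
    ((EuclideanSpace.equiv (Fin d) ℝ).symm f : EuclideanSpace ℝ (Fin d)) j = f j := rfl

lemma eucl_symm_eq_sum {d : ℕ} (f : Fin d → ℝ) :
    ((EuclideanSpace.equiv (Fin d) ℝ).symm f : EuclideanSpace ℝ (Fin d))
      = ∑ j : Fin d, f j • EuclideanSpace.single j (1:ℝ) := by
  ext k
  rw [eucl_symm_apply]
  have : (∑ j : Fin d, f j • EuclideanSpace.single j (1:ℝ)) k
      = ∑ j : Fin d, f j * (EuclideanSpace.single j (1:ℝ) k) := by
    induction (Finset.univ : Finset (Fin d)) using Finset.induction_on with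
    | empty => simp
    | insert _ _ h ih => simp_all [Finset.sum_insert h]
  rw [this]
  simp [EuclideanSpace.single_apply]

/-- The scalar Duhamel formula for component `j` of a solution. -/
lemma duhamel_scalar {d : ℕ} (τ : ℕ → ℝ) (hτmono : StrictMono τ)
    (hτtop : Filter.Tendsto τ Filter.atTop Filter.atTop)
    (x fv : ℝ → EuclideanSpace ℝ (Fin d)) (a : Fin d → ℝ → ℝ) (φ : Fin d → ℝ → ℝ)
    (hxcont : ContinuousOn x (Ici 0))
    (hfms : AEStronglyMeasurable fv (volume.restrict (Ioi 0)))
    (L : ℝ) (hL0 : 0 ≤ L) (hfbd : ∀ t > (0:ℝ), ‖fv t‖ ≤ L * ‖x t‖)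
    (α : ℝ) (hα : 0 < α)
    (hφd : ∀ j, ∀ t > (0:ℝ), (∀ n, t ≠ τ n) → HasDerivAt (φ j) (a j t) t)
    (hφcont : ∀ j, ContinuousOn (φ j) (Ici 0))
    (hφbd : ∀ j, ∀ t ≥ (0:ℝ), |φ j t| ≤ α * t)
    (hxd : ∀ t > (0:ℝ), (∀ n, t ≠ τ n) → ∃ v : EuclideanSpace ℝ (Fin d),
      HasDerivAt x v t ∧ ∀ j, v j = a j t * (x t) j + (fv t) j)
    (s t : ℝ) (hs : 0 < s) (hst : s ≤ t) (j : Fin d) :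
    (x t) j = Real.exp (φ j t - φ j s) * (x s) j
      + ∫ r in s..t, Real.exp (φ j t - φ j r) * (fv r) j := by
  have hIccpos : ∀ r ∈ Icc s t, (0:ℝ) < r := fun r hr => lt_of_lt_of_le hs hr.1
  have hIccnn : Icc s t ⊆ Ici (0:ℝ) := fun r hr => (hIccpos r hr).le
  set yj : ℝ → ℝ := fun r => Real.exp (-φ j r) * (x r) j with hyj
  set D : ℝ → ℝ := fun r => Real.exp (-φ j r) * (fv r) j with hD
  -- derivative of yj off switching times
  have hyderiv : ∀ r ∈ Ioo s t, (∀ n, r ≠ τ n) → HasDerivAt yj (D r) r := by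
    intro r hr hne
    have hr0 : 0 < r := hs.trans hr.1
    obtain ⟨v, hv, hvj⟩ := hxd r hr0 hne
    have hxj : HasDerivAt (fun r => (x r) j) (v j) r := by
      have := (EuclideanSpace.proj j).hasFDerivAt.comp_hasDerivAt r hv
      simpa [Function.comp_def] using this
    have hφj : HasDerivAt (fun r => Real.exp (-φ j r)) (-(a j r) * Real.exp (-φ j r)) r := by
      have h1 : HasDerivAt (fun r => -φ j r) (-(a j r)) r := (hφd j r hr0 hne).neg
      simpa [mul_comm, Function.comp_def] using (Real.hasDerivAt_exp (-φ j r)).comp r h1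
    have := hφj.mul hxj
    refine this.congr_deriv ?_
    rw [hvj j]; simp only [hD]
    ring
  -- continuity of yj
  have hycont : ContinuousOn yj (Icc s t) := by
    apply ContinuousOn.mul
    · exact (Real.continuous_exp.comp_continuousOn (((hφcont j).mono hIccnn).neg))
    · exact ((EuclideanSpace.proj j).continuous.comp_continuousOn (hxcont.mono hIccnn))
  -- integrability of D
  have hDms : AEStronglyMeasurable D (volume.restrict (Ioc s t)) := by
    apply AEStronglyMeasurable.mul
    · exact (Real.continuous_exp.comp_continuousOn
        (((hφcont j).mono (Ioc_subset_Icc_self.trans hIccnn)).neg)).aestronglyMeasurable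
        measurableSet_Ioc
    · exact ((EuclideanSpace.proj j).continuous.comp_aestronglyMeasurable
        (hfms.mono_measure (Measure.restrict_mono (fun r hr => hs.trans hr.1) le_rfl)))
  have hbnd : ∀ r ∈ Icc s t, |D r| ≤ Real.exp (α * t) * (L * ‖x r‖) := by
    intro r hr
    have hr0 : 0 < r := hIccpos r hr
    have h1 : |Real.exp (-φ j r)| ≤ Real.exp (α * t) := by
      rw [abs_of_pos (Real.exp_pos _)]
      apply Real.exp_le_exp.2
      have := hφbd j r hr0.le
      have h2 : α * r ≤ α * t := by nlinarith [hr.2]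
      cases' abs_le.1 this with hl hu
      linarith
    have h2 : |(fv r) j| ≤ L * ‖x r‖ := le_trans (eucl_coord_le_norm _ j) (hfbd r hr0)
    calc |D r| = |Real.exp (-φ j r)| * |(fv r) j| := abs_mul _ _
      _ ≤ Real.exp (α * t) * (L * ‖x r‖) := by
          apply mul_le_mul h1 h2 (abs_nonneg _) (le_of_lt (Real.exp_pos _))
  have hDint : IntervalIntegrable D volume s t := by
    rw [intervalIntegrable_iff_integrableOn_Ioc_of_le hst]
    apply Integrable.mono' (g := fun r => Real.exp (α * t) * (L * ‖x r‖))
    · apply Integrable.const_mul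
      apply Integrable.const_mul
      exact ((hxcont.mono hIccnn).norm.integrableOn_Icc).mono_set Ioc_subset_Icc_self
    · exact hDms
    · exact (ae_restrict_iff' measurableSet_Ioc).2 (Filter.Eventually.of_forall
        (fun r hr => by simpa [Real.norm_eq_abs] using hbnd r (Ioc_subset_Icc_self hr)))
  -- the finitely many switching times
  obtain ⟨m, hm⟩ : ∃ m : ℕ, ∀ n, τ n ∈ Ioo s t → n < m := by
    obtain ⟨m, hm⟩ := (hτtop.eventually_ge_atTop t).exists_forall_of_atTop
    exact ⟨m, fun n hn => by
      by_contra h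
      push_neg at h
      exact absurd (hm n h) (not_le.2 hn.2)⟩
  have hftc := ftc_paste τ hτmono m yj D s t hst hycont hyderiv hDint hm
  -- unfold
  have hs' : yj t = yj s + ∫ r in s..t, D r := by rw [hftc]; ring
  have key : (x t) j = Real.exp (φ j t) * yj t := by
    rw [hyj]
    simp only []
    rw [← mul_assoc, ← Real.exp_add]
    simp
  rw [key, hs', mul_add]
  congr 1
  · rw [hyj]
    simp only []
    rw [← mul_assoc, ← Real.exp_add, sub_eq_add_neg]
  · rw [← intervalIntegral.integral_const_mul]
    apply intervalIntegral.integral_congr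
    intro r _
    simp only [hD]
    rw [← mul_assoc, ← Real.exp_add, sub_eq_add_neg]

lemma eucl_proj_apply {d : ℕ} (v : EuclideanSpace ℝ (Fin d)) (j : Fin d) :
    (EuclideanSpace.proj j) v = v j := rfl

lemma aesm_sum {ι α E : Type*} [MeasurableSpace α] [NormedAddCommGroup E]
    (s : Finset ι) (μ : MeasureTheory.Measure α) (g : ι → α → E)
    (h : ∀ i ∈ s, MeasureTheory.AEStronglyMeasurable (g i) μ) :
    MeasureTheory.AEStronglyMeasurable (fun r => ∑ i ∈ s, g i r) μ := by
  classical
  induction s using Finset.induction_on with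
  | empty => simpa using MeasureTheory.aestronglyMeasurable_const
  | insert _ _ hni ih =>
    rename_i i s'
    simp only [Finset.sum_insert hni]
    exact (h i (Finset.mem_insert_self i s')).add
      (ih (fun i hi => h i (Finset.mem_insert_of_mem hi)))

/-- forward vector estimate: the weighted norm `z` satisfies an integral inequality. -/
lemma vest_fwd {d : ℕ} (x fv : ℝ → EuclideanSpace ℝ (Fin d)) (φ : Fin d → ℝ → ℝ) (ψ : ℝ → ℝ)
    (hxcont : ContinuousOn x (Ici 0))
    (hfms : AEStronglyMeasurable fv (volume.restrict (Ioi 0)))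
    (L : ℝ) (hL0 : 0 ≤ L) (hfbd : ∀ t > (0:ℝ), ‖fv t‖ ≤ L * ‖x t‖)
    (hφcont : ∀ j, ContinuousOn (φ j) (Ici 0))
    (hψcont : ContinuousOn ψ (Ici 0))
    (K' : ℝ) (hK0 : 0 < K')
    (hker : ∀ j, ∀ r t : ℝ, 0 < r → r ≤ t →
      Real.exp (φ j t - φ j r) ≤ K' * Real.exp (ψ t - ψ r))
    (hid : ∀ (s t : ℝ), 0 < s → s ≤ t → ∀ j, (x t) j = Real.exp (φ j t - φ j s) * (x s) j
      + ∫ r in s..t, Real.exp (φ j t - φ j r) * (fv r) j)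
    (s t : ℝ) (hs : 0 < s) (hst : s ≤ t) :
    ‖x t‖ * Real.exp (-ψ t) ≤ K' * (‖x s‖ * Real.exp (-ψ s))
      + (K' * L) * ∫ r in s..t, ‖x r‖ * Real.exp (-ψ r) := by
  have hIccpos : ∀ r ∈ Icc s t, (0:ℝ) < r := fun r hr => lt_of_lt_of_le hs hr.1
  have hIccnn : Icc s t ⊆ Ici (0:ℝ) := fun r hr => (hIccpos r hr).le
  set G2 : ℝ → EuclideanSpace ℝ (Fin d) := fun r =>
    (EuclideanSpace.equiv (Fin d) ℝ).symm (fun j => Real.exp (φ j t - φ j r) * (fv r) j)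
    with hG2
  set ρ : ℝ → ℝ := fun r => K' * Real.exp (ψ t - ψ r) * (L * ‖x r‖) with hρ
  have hρcont : ContinuousOn ρ (Icc s t) := by
    apply ContinuousOn.mul
    · apply continuousOn_const.mul
      exact Real.continuous_exp.comp_continuousOn
        ((continuousOn_const.sub (hψcont.mono hIccnn)))
    · exact continuousOn_const.mul (hxcont.mono hIccnn).norm
  have hGbd : ∀ r ∈ Icc s t, ‖G2 r‖ ≤ ρ r := by
    intro r hr
    have hr0 : 0 < r := hIccpos r hr
    have h1 : ‖G2 r‖ ≤ (K' * Real.exp (ψ t - ψ r)) * ‖fv r‖ := by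
      apply eucl_diag_norm_le _ _ _ (by positivity)
      intro j
      rw [abs_of_pos (Real.exp_pos _)]
      exact hker j r t hr0 hr.2
    calc ‖G2 r‖ ≤ (K' * Real.exp (ψ t - ψ r)) * ‖fv r‖ := h1
      _ ≤ (K' * Real.exp (ψ t - ψ r)) * (L * ‖x r‖) := by
          apply mul_le_mul_of_nonneg_left (hfbd r hr0) (by positivity)
      _ = ρ r := rfl
  have hGms : AEStronglyMeasurable G2 (volume.restrict (Ioc s t)) := by
    have heq : ∀ r, G2 r = ∑ j : Fin d,
        (Real.exp (φ j t - φ j r) * (fv r) j) • EuclideanSpace.single j (1:ℝ) := by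
      intro r; rw [hG2]; exact eucl_symm_eq_sum _
    simp only [funext heq]
    apply aesm_sum
    intro j _
    apply AEStronglyMeasurable.smul_const
    apply AEStronglyMeasurable.mul
    · exact (Real.continuous_exp.comp_continuousOn
        ((continuousOn_const.sub ((hφcont j).mono (Ioc_subset_Icc_self.trans hIccnn))))).aestronglyMeasurable
        measurableSet_Ioc
    · exact ((EuclideanSpace.proj j).continuous.comp_aestronglyMeasurable
        (hfms.mono_measure (Measure.restrict_mono (fun r hr => hs.trans hr.1) le_rfl)))
  have hρint : IntervalIntegrable ρ volume s t := by
    apply ContinuousOn.intervalIntegrable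
    rwa [uIcc_of_le hst]
  have hGint : IntervalIntegrable G2 volume s t := by
    rw [intervalIntegrable_iff_integrableOn_Ioc_of_le hst]
    apply Integrable.mono' (g := ρ)
    · exact (intervalIntegrable_iff_integrableOn_Ioc_of_le hst).1 hρint
    · exact hGms
    · exact (ae_restrict_iff' measurableSet_Ioc).2 (Filter.Eventually.of_forall
        (fun r hr => hGbd r (Ioc_subset_Icc_self hr)))
  set w : EuclideanSpace ℝ (Fin d) := ∫ r in s..t, G2 r with hw
  set v1 : EuclideanSpace ℝ (Fin d) :=
    (EuclideanSpace.equiv (Fin d) ℝ).symm (fun j => Real.exp (φ j t - φ j s) * (x s) j) with hv1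
  have hxeq : x t = v1 + w := by
    ext k
    have hcomp : w k = ∫ r in s..t, Real.exp (φ k t - φ k r) * (fv r) k := by
      have h := (EuclideanSpace.proj k).intervalIntegral_comp_comm hGint
      calc w k = (EuclideanSpace.proj k) (∫ r in s..t, G2 r) := rfl
        _ = ∫ r in s..t, (EuclideanSpace.proj k) (G2 r) := h.symm
        _ = ∫ r in s..t, Real.exp (φ k t - φ k r) * (fv r) k :=
            intervalIntegral.integral_congr (fun r _ => rfl)
    have : (v1 + w) k = v1 k + w k := rfl
    rw [this, hcomp, hv1, eucl_symm_apply]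
    exact hid s t hs hst k
  have hv1n : ‖v1‖ ≤ (K' * Real.exp (ψ t - ψ s)) * ‖x s‖ := by
    apply eucl_diag_norm_le _ _ _ (by positivity)
    intro j
    rw [abs_of_pos (Real.exp_pos _)]
    exact hker j s t hs hst
  have hwn : ‖w‖ ≤ ∫ r in s..t, ρ r := by
    calc ‖w‖ ≤ ∫ r in s..t, ‖G2 r‖ := intervalIntegral.norm_integral_le_integral_norm hst
      _ ≤ ∫ r in s..t, ρ r := by
          apply intervalIntegral.integral_mono_on hst hGint.norm hρint
          exact hGbd
  have hρval : ∫ r in s..t, ρ r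
      = Real.exp (ψ t) * ((K' * L) * ∫ r in s..t, ‖x r‖ * Real.exp (-ψ r)) := by
    rw [← intervalIntegral.integral_const_mul, ← intervalIntegral.integral_const_mul]
    apply intervalIntegral.integral_congr
    intro r _
    rw [hρ]
    simp only []
    rw [Real.exp_sub]
    have hepos : (0:ℝ) < Real.exp (ψ r) := Real.exp_pos _
    rw [Real.exp_neg]
    field_simp
  have hxtn : ‖x t‖ ≤ (K' * Real.exp (ψ t - ψ s)) * ‖x s‖
      + Real.exp (ψ t) * ((K' * L) * ∫ r in s..t, ‖x r‖ * Real.exp (-ψ r)) := by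
    calc ‖x t‖ = ‖v1 + w‖ := by rw [hxeq]
      _ ≤ ‖v1‖ + ‖w‖ := norm_add_le _ _
      _ ≤ _ := by
          apply add_le_add hv1n
          calc ‖w‖ ≤ ∫ r in s..t, ρ r := hwn
            _ = _ := hρval
  have hemt : (0:ℝ) < Real.exp (-ψ t) := Real.exp_pos _
  have := mul_le_mul_of_nonneg_right hxtn hemt.le
  calc ‖x t‖ * Real.exp (-ψ t) ≤ ((K' * Real.exp (ψ t - ψ s)) * ‖x s‖
      + Real.exp (ψ t) * ((K' * L) * ∫ r in s..t, ‖x r‖ * Real.exp (-ψ r))) * Real.exp (-ψ t) := this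
    _ = K' * (‖x s‖ * Real.exp (-ψ s))
      + (Real.exp (ψ t) * Real.exp (-ψ t)) * ((K' * L) * ∫ r in s..t, ‖x r‖ * Real.exp (-ψ r)) := by
        have h1 : (0:ℝ) < Real.exp (ψ t) := Real.exp_pos _
        have h2 : (0:ℝ) < Real.exp (ψ s) := Real.exp_pos _
        rw [Real.exp_sub, Real.exp_neg (ψ t), Real.exp_neg (ψ s)]
        field_simp
    _ = K' * (‖x s‖ * Real.exp (-ψ s))
      + (K' * L) * ∫ r in s..t, ‖x r‖ * Real.exp (-ψ r) := by
        rw [← Real.exp_add]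
        simp

/-- backward vector estimate. -/
lemma vest_bwd {d : ℕ} (x fv : ℝ → EuclideanSpace ℝ (Fin d)) (φ : Fin d → ℝ → ℝ)
    (hxcont : ContinuousOn x (Ici 0))
    (hfms : AEStronglyMeasurable fv (volume.restrict (Ioi 0)))
    (L : ℝ) (hL0 : 0 ≤ L) (hfbd : ∀ t > (0:ℝ), ‖fv t‖ ≤ L * ‖x t‖)
    (hφcont : ∀ j, ContinuousOn (φ j) (Ici 0))
    (α : ℝ) (hα : 0 < α)
    (hφlip : ∀ j, ∀ p q : ℝ, 0 ≤ p → p ≤ q → |φ j q - φ j p| ≤ α * (q - p))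
    (hid : ∀ (s t : ℝ), 0 < s → s ≤ t → ∀ j, (x t) j = Real.exp (φ j t - φ j s) * (x s) j
      + ∫ r in s..t, Real.exp (φ j t - φ j r) * (fv r) j)
    (s t : ℝ) (hs : 0 < s) (hst : s ≤ t) :
    ‖x s‖ * Real.exp (α * s) ≤ ‖x t‖ * Real.exp (α * t)
      + L * ∫ r in s..t, ‖x r‖ * Real.exp (α * r) := by
  have hIccpos : ∀ r ∈ Icc s t, (0:ℝ) < r := fun r hr => lt_of_lt_of_le hs hr.1
  have hIccnn : Icc s t ⊆ Ici (0:ℝ) := fun r hr => (hIccpos r hr).le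
  -- coefficient bound
  have hcoef : ∀ j, ∀ r ∈ Icc s t, Real.exp (φ j s - φ j r) ≤ Real.exp (α * r) * Real.exp (-(α * s)) := by
    intro j r hr
    rw [← Real.exp_add]
    apply Real.exp_le_exp.2
    have h1 := hφlip j s r hs.le hr.1
    cases' abs_le.1 h1 with hl hu
    linarith
  set G3 : ℝ → EuclideanSpace ℝ (Fin d) := fun r =>
    (EuclideanSpace.equiv (Fin d) ℝ).symm (fun j => Real.exp (φ j s - φ j r) * (fv r) j)
    with hG3
  set ρ : ℝ → ℝ := fun r => Real.exp (-(α * s)) * (L * (‖x r‖ * Real.exp (α * r))) with hρ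
  have hρcont : ContinuousOn ρ (Icc s t) := by
    apply continuousOn_const.mul
    apply continuousOn_const.mul
    exact ((hxcont.mono hIccnn).norm).mul (Real.continuous_exp.comp_continuousOn (by fun_prop))
  have hGbd : ∀ r ∈ Icc s t, ‖G3 r‖ ≤ ρ r := by
    intro r hr
    have hr0 : 0 < r := hIccpos r hr
    have h1 : ‖G3 r‖ ≤ (Real.exp (α * r) * Real.exp (-(α * s))) * ‖fv r‖ := by
      apply eucl_diag_norm_le _ _ _ (by positivity)
      intro j
      rw [abs_of_pos (Real.exp_pos _)]
      exact hcoef j r hr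
    calc ‖G3 r‖ ≤ (Real.exp (α * r) * Real.exp (-(α * s))) * ‖fv r‖ := h1
      _ ≤ (Real.exp (α * r) * Real.exp (-(α * s))) * (L * ‖x r‖) := by
          apply mul_le_mul_of_nonneg_left (hfbd r hr0) (by positivity)
      _ = ρ r := by rw [hρ]; ring
  have hGms : AEStronglyMeasurable G3 (volume.restrict (Ioc s t)) := by
    have heq : ∀ r, G3 r = ∑ j : Fin d,
        (Real.exp (φ j s - φ j r) * (fv r) j) • EuclideanSpace.single j (1:ℝ) := by
      intro r; rw [hG3]; exact eucl_symm_eq_sum _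
    simp only [funext heq]
    apply aesm_sum
    intro j _
    apply AEStronglyMeasurable.smul_const
    apply AEStronglyMeasurable.mul
    · exact (Real.continuous_exp.comp_continuousOn
        ((continuousOn_const.sub ((hφcont j).mono (Ioc_subset_Icc_self.trans hIccnn))))).aestronglyMeasurable
        measurableSet_Ioc
    · exact ((EuclideanSpace.proj j).continuous.comp_aestronglyMeasurable
        (hfms.mono_measure (Measure.restrict_mono (fun r hr => hs.trans hr.1) le_rfl)))
  have hρint : IntervalIntegrable ρ volume s t := by
    apply ContinuousOn.intervalIntegrable
    rwa [uIcc_of_le hst]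
  have hGint : IntervalIntegrable G3 volume s t := by
    rw [intervalIntegrable_iff_integrableOn_Ioc_of_le hst]
    apply Integrable.mono' (g := ρ)
    · exact (intervalIntegrable_iff_integrableOn_Ioc_of_le hst).1 hρint
    · exact hGms
    · exact (ae_restrict_iff' measurableSet_Ioc).2 (Filter.Eventually.of_forall
        (fun r hr => hGbd r (Ioc_subset_Icc_self hr)))
  set w : EuclideanSpace ℝ (Fin d) := ∫ r in s..t, G3 r with hw
  set v3 : EuclideanSpace ℝ (Fin d) :=
    (EuclideanSpace.equiv (Fin d) ℝ).symm (fun j => Real.exp (φ j s - φ j t) * (x t) j) with hv3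
  -- the backward identity x s = v3 - w
  have hxeq : x s = v3 - w := by
    ext k
    have hcomp : w k = ∫ r in s..t, Real.exp (φ k s - φ k r) * (fv r) k := by
      have h := (EuclideanSpace.proj k).intervalIntegral_comp_comm hGint
      calc w k = (EuclideanSpace.proj k) (∫ r in s..t, G3 r) := rfl
        _ = ∫ r in s..t, (EuclideanSpace.proj k) (G3 r) := h.symm
        _ = ∫ r in s..t, Real.exp (φ k s - φ k r) * (fv r) k :=
            intervalIntegral.integral_congr (fun r _ => rfl)
    have hsub : (v3 - w) k = v3 k - w k := rfl
    rw [hsub, hcomp, hv3, eucl_symm_apply]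
    have hidk := hid s t hs hst k
    have hEst : Real.exp (φ k s - φ k t) * Real.exp (φ k t - φ k s) = 1 := by
      rw [← Real.exp_add]; ring_nf; exact Real.exp_zero
    have htrans : ∀ r : ℝ, Real.exp (φ k s - φ k t) * (Real.exp (φ k t - φ k r) * (fv r) k)
        = Real.exp (φ k s - φ k r) * (fv r) k := by
      intro r
      rw [← mul_assoc, ← Real.exp_add]
      ring_nf
    have h2 : Real.exp (φ k s - φ k t) * (x t) k
        = (x s) k + ∫ r in s..t, Real.exp (φ k s - φ k r) * (fv r) k := by
      rw [hidk, mul_add, ← mul_assoc, hEst, one_mul]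
      congr 1
      rw [← intervalIntegral.integral_const_mul]
      exact intervalIntegral.integral_congr (fun r _ => htrans r)
    rw [h2]
    ring
  have hv3n : ‖v3‖ ≤ (Real.exp (α * t) * Real.exp (-(α * s))) * ‖x t‖ := by
    apply eucl_diag_norm_le _ _ _ (by positivity)
    intro j
    rw [abs_of_pos (Real.exp_pos _)]
    exact hcoef j t (right_mem_Icc.2 hst)
  have hwn : ‖w‖ ≤ ∫ r in s..t, ρ r := by
    calc ‖w‖ ≤ ∫ r in s..t, ‖G3 r‖ := intervalIntegral.norm_integral_le_integral_norm hst
      _ ≤ ∫ r in s..t, ρ r := intervalIntegral.integral_mono_on hst hGint.norm hρint hGbd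
  have hρval : ∫ r in s..t, ρ r
      = Real.exp (-(α * s)) * (L * ∫ r in s..t, ‖x r‖ * Real.exp (α * r)) := by
    rw [← intervalIntegral.integral_const_mul, ← intervalIntegral.integral_const_mul]
  have hxsn : ‖x s‖ ≤ (Real.exp (α * t) * Real.exp (-(α * s))) * ‖x t‖
      + Real.exp (-(α * s)) * (L * ∫ r in s..t, ‖x r‖ * Real.exp (α * r)) := by
    calc ‖x s‖ = ‖v3 - w‖ := by rw [hxeq]
      _ ≤ ‖v3‖ + ‖w‖ := norm_sub_le _ _
      _ ≤ _ := by
          apply add_le_add hv3n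
          calc ‖w‖ ≤ ∫ r in s..t, ρ r := hwn
            _ = _ := hρval
  have hes : (0:ℝ) < Real.exp (α * s) := Real.exp_pos _
  have h14 : Real.exp (-(α * s)) * Real.exp (α * s) = 1 := by
    rw [← Real.exp_add]; ring_nf; exact Real.exp_zero
  have := mul_le_mul_of_nonneg_right hxsn hes.le
  calc ‖x s‖ * Real.exp (α * s)
      ≤ ((Real.exp (α * t) * Real.exp (-(α * s))) * ‖x t‖
        + Real.exp (-(α * s)) * (L * ∫ r in s..t, ‖x r‖ * Real.exp (α * r))) * Real.exp (α * s) := this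
    _ = ‖x t‖ * Real.exp (α * t) * (Real.exp (-(α * s)) * Real.exp (α * s))
        + (L * ∫ r in s..t, ‖x r‖ * Real.exp (α * r)) * (Real.exp (-(α * s)) * Real.exp (α * s)) := by
        ring
    _ = ‖x t‖ * Real.exp (α * t) + L * ∫ r in s..t, ‖x r‖ * Real.exp (α * r) := by
        rw [h14, mul_one, mul_one]

set_option maxHeartbeats 2000000 in
/-- diagonal case of the stability theorem, with the explicit
perturbation threshold `δ = |χ| exp(−2γΔT*)` and the explicit Lyapunov-exponent
bound `χ + (L/δ)|χ| < 0`. -/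
theorem stmt0
    {d : ℕ} (hd : 2 ≤ d) {I : Type*}
    (A : I → ℝ → Matrix (Fin d) (Fin d) ℝ)
    (F : I → ℝ → EuclideanSpace ℝ (Fin d) → EuclideanSpace ℝ (Fin d))
    (α L Tstar : ℝ) (hα : 0 < α) (hT : 0 < Tstar) (hL0 : 0 ≤ L)
    (hAcont : ∀ i, ContinuousOn (A i) (Set.Ioi (0:ℝ)))
    (hAnorm : ∀ i, ∀ t > (0:ℝ), ∀ v : EuclideanSpace ℝ (Fin d),
      ‖mulVecE (A i t) v‖ ≤ α * ‖v‖)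
    (hAdiag : ∀ i, ∀ t > (0:ℝ), (A i t).IsDiag)
    (hFcont : ∀ i, ContinuousOn (Function.uncurry (F i))
      ((Set.Ioi (0:ℝ)) ×ˢ (Set.univ : Set (EuclideanSpace ℝ (Fin d)))))
    (hFbd : ∀ i, ∀ t > (0:ℝ), ∀ v : EuclideanSpace ℝ (Fin d), ‖F i t v‖ ≤ L * ‖v‖)
    (τ : ℕ → ℝ) (hτ0 : τ 0 = 0) (hτmono : StrictMono τ)
    (hτtop : Filter.Tendsto τ Filter.atTop Filter.atTop)
    (hτgap : ∀ n : ℕ, τ (n+1) - τ n ≤ Tstar)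
    (σ : ℕ → I) (u : ℝ → I)
    (hu : ∀ n : ℕ, ∀ t ∈ Set.Ioc (τ n) (τ (n+1)), u t = σ (n+1))
    (Δ : ℕ) (hΔ : 0 < Δ)
    (nseq : ℕ → ℕ) (hn0 : nseq 0 = 0) (hnmono : StrictMono nseq)
    (hngap : ∀ s : ℕ, nseq (s+1) - nseq s ≤ Δ)
    (χ γ δ : ℝ)
    (hχ : χ = Filter.limsup (fun s : ℕ =>
        (τ (nseq s))⁻¹ * ∑ k ∈ Finset.range s, ⨆ j : Fin d,
          ∫ t in (τ (nseq k))..(τ (nseq (k+1))), A (u t) t j j) Filter.atTop)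
    (hχneg : χ < 0)
    (hγ : γ = sSup {r : ℝ | ∃ t > (0:ℝ), ∃ j : Fin d, A (u t) t j j = r}
            - sInf {r : ℝ | ∃ t > (0:ℝ), ∃ j : Fin d, A (u t) t j j = r})
    (hδ : δ = |χ| * Real.exp (-2 * γ * Δ * Tstar))
    (hLδ : L < δ)
    (x : ℝ → EuclideanSpace ℝ (Fin d)) (x₀ : EuclideanSpace ℝ (Fin d))
    (hx0 : x 0 = x₀)
    (hxcont : ContinuousOn x (Set.Ici (0:ℝ)))
    (hxode : ∀ t > (0:ℝ), (∀ n : ℕ, t ≠ τ n) →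
        HasDerivAt x (mulVecE (A (u t) t) (x t) + F (u t) t (x t)) t) :
    (x₀ ≠ 0 → Filter.limsup (fun t : ℝ => Real.log ‖x t‖ / t) Filter.atTop
        ≤ χ + (L / δ) * |χ|)
    ∧ (∀ c : ℝ, χ + (L / δ) * |χ| < c →
        ∀ᶠ t : ℝ in Filter.atTop, ‖x t‖ ≤ Real.exp (c * t))
    ∧ χ + (L / δ) * |χ| < 0 := by
  classical
  have hj0 : Nonempty (Fin d) := ⟨⟨0, by omega⟩⟩
  obtain ⟨j₀⟩ := hj0
  have hj0' : Nonempty (Fin d) := ⟨j₀⟩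
  set a : Fin d → ℝ → ℝ := fun j t => A (u t) t j j with ha
  set fv : ℝ → EuclideanSpace ℝ (Fin d) := fun t => F (u t) t (x t) with hfv
  set e : ℕ → ℝ := fun s => τ (nseq s) with he
  -- basic facts
  have hτnn : ∀ n, 0 ≤ τ n := fun n => hτ0 ▸ hτmono.monotone (Nat.zero_le n)
  have he0 : e 0 = 0 := by rw [he]; simp [hn0, hτ0]
  have hemono : StrictMono e := hτmono.comp hnmono
  have henn : ∀ s, 0 ≤ e s := fun s => hτnn _
  have hetop : Filter.Tendsto e Filter.atTop Filter.atTop :=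
    hτtop.comp hnmono.tendsto_atTop
  have hegap : ∀ s, e (s+1) - e s ≤ (Δ:ℝ) * Tstar := by
    intro s
    have h1 := tau_gap_le τ Tstar hτgap (nseq s) (nseq (s+1)) (hnmono (lt_add_one s)).le
    have h2 : ((nseq (s+1) - nseq s : ℕ) : ℝ) ≤ (Δ:ℝ) := by exact_mod_cast hngap s
    have h3 : ((nseq (s+1) - nseq s : ℕ) : ℝ) * Tstar ≤ (Δ:ℝ) * Tstar :=
      mul_le_mul_of_nonneg_right h2 hT.le
    exact le_trans h1 h3
  have he1pos : 0 < e 1 := he0 ▸ hemono (by omega)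
  -- the piece index pt and block index blk
  set pt : ℝ → ℕ := fun t => sInf {n : ℕ | t ≤ τ (n+1)} with hptdef
  have hptne : ∀ t : ℝ, {n : ℕ | t ≤ τ (n+1)}.Nonempty := by
    intro t
    obtain ⟨n, hn⟩ := (hτtop.eventually_ge_atTop t).exists
    exact ⟨n, hn.trans (hτmono.monotone (Nat.le_succ n))⟩
  have hpt : ∀ t > (0:ℝ), τ (pt t) < t ∧ t ≤ τ (pt t + 1) := by
    intro t ht
    constructor
    · rcases hc : pt t with _ | k
      · rw [hτ0]; exact ht
      · have hk2 : k < pt t := by omega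
        have hnm : k ∉ {n : ℕ | t ≤ τ (n+1)} :=
          Nat.notMem_of_lt_sInf (show k < sInf {n : ℕ | t ≤ τ (n+1)} from hk2)
        simp only [Set.mem_setOf_eq, not_le] at hnm
        exact hnm
    · exact Nat.sInf_mem (hptne t)
  set blk : ℝ → ℕ := fun t => sInf {s : ℕ | t ≤ e (s+1)} with hblkdef
  have hblkne : ∀ t : ℝ, {s : ℕ | t ≤ e (s+1)}.Nonempty := by
    intro t
    obtain ⟨s, hs⟩ := (hetop.eventually_ge_atTop t).exists
    exact ⟨s, hs.trans (hemono.monotone (Nat.le_succ s))⟩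
  have hblk : ∀ t > (0:ℝ), e (blk t) < t ∧ t ≤ e (blk t + 1) := by
    intro t ht
    constructor
    · rcases hc : blk t with _ | k
      · rw [he0]; exact ht
      · have hk2 : k < blk t := by omega
        have hnm : k ∉ {s : ℕ | t ≤ e (s+1)} :=
          Nat.notMem_of_lt_sInf (show k < sInf {s : ℕ | t ≤ e (s+1)} from hk2)
        simp only [Set.mem_setOf_eq, not_le] at hnm
        exact hnm
    · exact Nat.sInf_mem (hblkne t)
  have hblkuniq : ∀ t s, t ∈ Set.Ioc (e s) (e (s+1)) → blk t = s := by
    intro t s hts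
    have ht : 0 < t := lt_of_le_of_lt (henn s) hts.1
    have h1 := hblk t ht
    have h2 : blk t < s + 1 := hemono.lt_iff_lt.mp (lt_of_lt_of_le h1.1 hts.2)
    have h3 : s < blk t + 1 := hemono.lt_iff_lt.mp (lt_of_lt_of_le hts.1 h1.2)
    omega
  have hblktop : Filter.Tendsto blk Filter.atTop Filter.atTop := by
    rw [Filter.tendsto_atTop]
    intro b
    filter_upwards [Filter.eventually_ge_atTop (e b + 1)] with t ht
    have ht0 : 0 < t := by linarith [henn b]
    by_contra h
    push_neg at h
    have : e (blk t + 1) ≤ e b := hemono.monotone (by omega)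
    linarith [(hblk t ht0).2]
  -- bound on diagonal entries
  have habd : ∀ (j : Fin d), ∀ t > (0:ℝ), |a j t| ≤ α := by
    intro j t ht
    have h1 := hAnorm (u t) t ht (EuclideanSpace.single j (1:ℝ))
    rw [EuclideanSpace.norm_single] at h1
    have h2 : (mulVecE (A (u t) t) (EuclideanSpace.single j (1:ℝ))) j = a j t := by
      show (Matrix.mulVec (A (u t) t)
        ((EuclideanSpace.equiv (Fin d) ℝ) (EuclideanSpace.single j (1:ℝ)))) j = a j t
      rw [Matrix.mulVec, dotProduct]
      rw [Finset.sum_eq_single j]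
      · have : (EuclideanSpace.equiv (Fin d) ℝ) (EuclideanSpace.single j (1:ℝ)) j
            = (1:ℝ) := by simp [EuclideanSpace.single_apply]
        rw [this, mul_one, ha]
      · intro k _ hk
        have : (EuclideanSpace.equiv (Fin d) ℝ) (EuclideanSpace.single j (1:ℝ)) k
            = (0:ℝ) := by simp [EuclideanSpace.single_apply, hk]
        rw [this, mul_zero]
      · intro h; exact absurd (Finset.mem_univ j) h
    calc |a j t| = |(mulVecE (A (u t) t) (EuclideanSpace.single j (1:ℝ))) j| := by rw [h2]
      _ ≤ ‖mulVecE (A (u t) t) (EuclideanSpace.single j (1:ℝ))‖ := eucl_coord_le_norm _ j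
      _ ≤ α := by simpa using h1
  -- oscillation bound
  have hosc : ∀ (j j' : Fin d) (t t' : ℝ), 0 < t → 0 < t' → a j t - a j' t' ≤ γ := by
    intro j j' t t' ht ht'
    have hbddA : BddAbove {r : ℝ | ∃ t > (0:ℝ), ∃ j : Fin d, A (u t) t j j = r} := by
      refine ⟨α, fun r hr => ?_⟩
      obtain ⟨t, ht, j, hj⟩ := hr
      exact hj ▸ le_of_abs_le (habd j t ht)
    have hbddB : BddBelow {r : ℝ | ∃ t > (0:ℝ), ∃ j : Fin d, A (u t) t j j = r} := by
      refine ⟨-α, fun r hr => ?_⟩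
      obtain ⟨t, ht, j, hj⟩ := hr
      exact hj ▸ neg_le_of_abs_le (habd j t ht)
    have h1 : a j t ≤ sSup {r : ℝ | ∃ t > (0:ℝ), ∃ j : Fin d, A (u t) t j j = r} :=
      le_csSup hbddA ⟨t, ht, j, rfl⟩
    have h2 : sInf {r : ℝ | ∃ t > (0:ℝ), ∃ j : Fin d, A (u t) t j j = r} ≤ a j' t' :=
      csInf_le hbddB ⟨t', ht', j', rfl⟩
    rw [hγ]; linarith
  have hγ0 : 0 ≤ γ := by have := hosc j₀ j₀ 1 1 one_pos one_pos; linarith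
  
  -- matrix entry continuity
  have hentry : ∀ j : Fin d, Continuous (fun M : Matrix (Fin d) (Fin d) ℝ => M j j) := by
    intro j
    exact (continuous_apply j).comp (continuous_apply j)
  have hIocsub : ∀ n : ℕ, Set.Ioc (τ n) (τ (n+1)) ⊆ Set.Ioi (0:ℝ) := by
    intro n t ht
    exact lt_of_le_of_lt (hτnn n) ht.1
  have hcover : Set.Ioi (0:ℝ) = ⋃ n, Set.Ioc (τ n) (τ (n+1)) := by
    ext t
    constructor
    · intro ht
      exact Set.mem_iUnion.2 ⟨pt t, (hpt t ht).1, (hpt t ht).2⟩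
    · intro ht
      obtain ⟨n, hn⟩ := Set.mem_iUnion.1 ht
      exact hIocsub n hn
  have hams : ∀ j : Fin d, AEStronglyMeasurable (a j) (volume.restrict (Set.Ioi 0)) := by
    intro j
    rw [hcover, aestronglyMeasurable_iUnion_iff]
    intro n
    have hg : ContinuousOn (fun t => A (σ (n+1)) t j j) (Set.Ioc (τ n) (τ (n+1))) :=
      (hentry j).comp_continuousOn ((hAcont (σ (n+1))).mono (hIocsub n))
    refine (hg.aestronglyMeasurable measurableSet_Ioc).congr ?_
    refine (ae_restrict_iff' measurableSet_Ioc).2 (Filter.Eventually.of_forall (fun t ht => ?_))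
    rw [ha]
    simp only []
    rw [hu n t ht]
  have haint : ∀ j : Fin d, ∀ p q : ℝ, 0 ≤ p → 0 ≤ q → IntervalIntegrable (a j) volume p q := by
    intro j p q hp hq
    rw [intervalIntegrable_iff]
    have hsub : Set.uIoc p q ⊆ Set.Ioi (0:ℝ) := fun r hr =>
      lt_of_le_of_lt (le_inf hp hq) hr.1
    apply MeasureTheory.Integrable.mono' (g := fun _ => α)
    · exact integrableOn_const measure_Ioc_lt_top.ne
    · exact (hams j).mono_measure (Measure.restrict_mono hsub le_rfl)
    · refine (ae_restrict_iff' measurableSet_uIoc).2 (Filter.Eventually.of_forall (fun t ht => ?_))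
      simpa [Real.norm_eq_abs] using habd j t (hsub ht)
  -- continuity of a j at non-switching points
  have hacont : ∀ j : Fin d, ∀ t > (0:ℝ), (∀ n, t ≠ τ n) → ContinuousAt (a j) t := by
    intro j t ht hne
    have h1 := hpt t ht
    have htlt : t < τ (pt t + 1) := lt_of_le_of_ne h1.2 (hne (pt t + 1))
    have hopen : Set.Ioo (τ (pt t)) (τ (pt t + 1)) ∈ nhds t := Ioo_mem_nhds h1.1 htlt
    have hg : ContinuousAt (fun r => A (σ (pt t + 1)) r j j) t :=
      ((hentry j).comp_continuousOn (hAcont (σ (pt t + 1)))).continuousAt (Ioi_mem_nhds ht)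
    have hev : (fun r => A (σ (pt t + 1)) r j j) =ᶠ[nhds t] a j := by
      filter_upwards [hopen] with r hr
      rw [ha]
      simp only []
      rw [hu (pt t) r ⟨hr.1, hr.2.le⟩]
    exact hg.congr hev
  -- the block maxima
  set m : ℕ → ℝ := fun k => ⨆ j : Fin d, ∫ t in (e k)..(e (k+1)), a j t with hm
  have hjh : ∀ k : ℕ, ∃ j : Fin d, (∫ t in (e k)..(e (k+1)), a j t) = m k := by
    intro k
    obtain ⟨j, hj⟩ := exists_eq_ciSup_of_finite
      (f := fun j : Fin d => ∫ t in (e k)..(e (k+1)), a j t)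
    exact ⟨j, hj⟩
  choose jhat hjhat' using hjh
  have hmle : ∀ (k : ℕ) (j : Fin d), (∫ t in (e k)..(e (k+1)), a j t) ≤ m k := by
    intro k j
    have h := le_ciSup (f := fun j : Fin d => ∫ t in (e k)..(e (k+1)), a j t)
      (Set.Finite.bddAbove (Set.finite_range _)) j
    exact h
  have hintabs : ∀ (j : Fin d) (p q : ℝ), 0 ≤ p → p ≤ q → |∫ t in p..q, a j t| ≤ α * (q - p) := by
    intro j p q hp hpq
    have h : ‖∫ t in p..q, a j t‖ ≤ α * |q - p| := by
      apply intervalIntegral.norm_integral_le_of_norm_le_const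
      intro r hr
      have hr0 : 0 < r := lt_of_le_of_lt (le_inf hp (hp.trans hpq)) hr.1
      simpa [Real.norm_eq_abs] using habd j r hr0
    rw [Real.norm_eq_abs, abs_of_nonneg (by linarith : (0:ℝ) ≤ q - p)] at h
    exact h
  have hmabs : ∀ k, |m k| ≤ α * (e (k+1) - e k) := by
    intro k
    have hlee : e k ≤ e (k+1) := (hemono (lt_add_one k)).le
    rw [abs_le]
    constructor
    · have h1 := hintabs j₀ (e k) (e (k+1)) (henn k) hlee
      have h2 := hmle k j₀
      rw [abs_le] at h1
      linarith
    · rw [← hjhat' k]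
      have h1 := hintabs (jhat k) (e k) (e (k+1)) (henn k) hlee
      rw [abs_le] at h1
      linarith
  set S : ℕ → ℝ := fun s => ∑ k ∈ Finset.range s, m k with hS
  have hSabs : ∀ s, |S s| ≤ α * e s := by
    intro s
    calc |S s| ≤ ∑ k ∈ Finset.range s, |m k| := Finset.abs_sum_le_sum_abs _ _
      _ ≤ ∑ k ∈ Finset.range s, α * (e (k+1) - e k) := Finset.sum_le_sum (fun k _ => hmabs k)
      _ = α * ∑ k ∈ Finset.range s, (e (k+1) - e k) := by rw [Finset.mul_sum]
      _ = α * (e s - e 0) := by rw [Finset.sum_range_sub]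
      _ = α * e s := by rw [he0]; ring
  have hχ' : χ = Filter.limsup (fun s : ℕ => (e s)⁻¹ * S s) Filter.atTop := by
    rw [hχ]
  -- the comparison function P and the primitives
  set P : ℝ → ℝ := fun t => a (jhat (blk t)) t with hP
  have hPbd : ∀ t > (0:ℝ), |P t| ≤ α := fun t ht => habd _ t ht
  have hcoverE : Set.Ioi (0:ℝ) = ⋃ s, Set.Ioc (e s) (e (s+1)) := by
    ext t
    constructor
    · intro ht
      exact Set.mem_iUnion.2 ⟨blk t, (hblk t ht).1, (hblk t ht).2⟩
    · intro ht
      obtain ⟨n, hn⟩ := Set.mem_iUnion.1 ht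
      exact lt_of_le_of_lt (henn n) hn.1
  have hPms : AEStronglyMeasurable P (volume.restrict (Set.Ioi 0)) := by
    rw [hcoverE, aestronglyMeasurable_iUnion_iff]
    intro s
    refine ((hams (jhat s)).mono_measure (Measure.restrict_mono
      (fun r hr => lt_of_le_of_lt (henn s) hr.1) le_rfl)).congr ?_
    refine (ae_restrict_iff' measurableSet_Ioc).2 (Filter.Eventually.of_forall (fun t ht => ?_))
    rw [hP]
    simp only []
    rw [hblkuniq t s ht]
  have hPint : ∀ p q : ℝ, 0 ≤ p → 0 ≤ q → IntervalIntegrable P volume p q := by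
    intro p q hp hq
    rw [intervalIntegrable_iff]
    have hsub : Set.uIoc p q ⊆ Set.Ioi (0:ℝ) := fun r hr =>
      lt_of_le_of_lt (le_inf hp hq) hr.1
    apply MeasureTheory.Integrable.mono' (g := fun _ => α)
    · exact integrableOn_const measure_Ioc_lt_top.ne
    · exact hPms.mono_measure (Measure.restrict_mono hsub le_rfl)
    · refine (ae_restrict_iff' measurableSet_uIoc).2 (Filter.Eventually.of_forall (fun t ht => ?_))
      simpa [Real.norm_eq_abs] using hPbd t (hsub ht)
  have hPintabs : ∀ (p q : ℝ), 0 ≤ p → p ≤ q → |∫ t in p..q, P t| ≤ α * (q - p) := by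
    intro p q hp hpq
    have h : ‖∫ t in p..q, P t‖ ≤ α * |q - p| := by
      apply intervalIntegral.norm_integral_le_of_norm_le_const
      intro r hr
      have hr0 : 0 < r := lt_of_le_of_lt (le_inf hp (hp.trans hpq)) hr.1
      simpa [Real.norm_eq_abs] using hPbd r hr0
    rw [Real.norm_eq_abs, abs_of_nonneg (by linarith : (0:ℝ) ≤ q - p)] at h
    exact h
  set φf : Fin d → ℝ → ℝ := fun j t => ∫ r in (0:ℝ)..t, a j r with hφf
  set ψ : ℝ → ℝ := fun t => ∫ r in (0:ℝ)..t, P r with hψ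
  have hφadd : ∀ (j : Fin d) (p q : ℝ), 0 ≤ p → 0 ≤ q →
      φf j q - φf j p = ∫ r in p..q, a j r := by
    intro j p q hp hq
    have h := intervalIntegral.integral_add_adjacent_intervals
      (haint j 0 p le_rfl hp) (haint j p q hp hq)
    rw [hφf]
    simp only []
    linarith
  have hψadd : ∀ (p q : ℝ), 0 ≤ p → 0 ≤ q → ψ q - ψ p = ∫ r in p..q, P r := by
    intro p q hp hq
    have h := intervalIntegral.integral_add_adjacent_intervals
      (hPint 0 p le_rfl hp) (hPint p q hp hq)
    rw [hψ]
    simp only []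
    linarith
  have hφlip : ∀ (j : Fin d) (p q : ℝ), 0 ≤ p → p ≤ q → |φf j q - φf j p| ≤ α * (q - p) := by
    intro j p q hp hpq
    rw [hφadd j p q hp (hp.trans hpq)]
    exact hintabs j p q hp hpq
  have hψlip : ∀ (p q : ℝ), 0 ≤ p → p ≤ q → |ψ q - ψ p| ≤ α * (q - p) := by
    intro p q hp hpq
    rw [hψadd p q hp (hp.trans hpq)]
    exact hPintabs p q hp hpq
  have hlipcont : ∀ g : ℝ → ℝ, (∀ (p q : ℝ), 0 ≤ p → p ≤ q → |g q - g p| ≤ α * (q - p)) →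
      ContinuousOn g (Set.Ici 0) := by
    intro g hg
    have : LipschitzOnWith (Real.toNNReal α) g (Set.Ici 0) := by
      apply LipschitzOnWith.of_dist_le_mul
      intro p hp q hq
      rw [Real.dist_eq, Real.dist_eq, Real.coe_toNNReal α hα.le]
      rcases le_total p q with h | h
      · rw [abs_sub_comm]
        calc |g q - g p| ≤ α * (q - p) := hg p q hp h
          _ = α * |p - q| := by rw [abs_sub_comm, abs_of_nonneg (by linarith)]
      · calc |g p - g q| ≤ α * (p - q) := hg q p hq h
          _ = α * |p - q| := by rw [abs_of_nonneg (by linarith)]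
    exact this.continuousOn
  have hφcont : ∀ j, ContinuousOn (φf j) (Set.Ici 0) := fun j => hlipcont _ (hφlip j)
  have hψcont : ContinuousOn ψ (Set.Ici 0) := hlipcont _ hψlip
  have hφ0 : ∀ j, φf j 0 = 0 := by
    intro j
    rw [hφf]
    simp only []
    exact intervalIntegral.integral_same
  have hφbd : ∀ (j : Fin d), ∀ t ≥ (0:ℝ), |φf j t| ≤ α * t := by
    intro j t ht
    have := hφlip j 0 t le_rfl ht
    rw [hφ0 j] at this
    simpa using this
  have hφd : ∀ (j : Fin d), ∀ t > (0:ℝ), (∀ n, t ≠ τ n) → HasDerivAt (φf j) (a j t) t := by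
    intro j t ht hne
    apply intervalIntegral.integral_hasDerivAt_right (haint j 0 t le_rfl ht.le) ?_
      (hacont j t ht hne)
    have h1 := hpt t ht
    have htlt : t < τ (pt t + 1) := lt_of_le_of_ne h1.2 (hne (pt t + 1))
    refine ⟨Set.Ioo (τ (pt t)) (τ (pt t + 1)), Ioo_mem_nhds h1.1 htlt, ?_⟩
    exact (hams j).mono_measure (Measure.restrict_mono
      (fun r hr => lt_of_le_of_lt (hτnn (pt t)) hr.1) le_rfl)
  have hPblock : ∀ k : ℕ, (∫ r in (e k)..(e (k+1)), P r) = m k := by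
    intro k
    rw [← hjhat' k]
    apply intervalIntegral.integral_congr_ae
    apply MeasureTheory.ae_of_all
    intro r hr
    rw [Set.uIoc_of_le (hemono (lt_add_one k)).le] at hr
    rw [hP]
    simp only []
    rw [hblkuniq r k hr]
  have hψS : ∀ s : ℕ, ψ (e s) = S s := by
    intro s
    have h2 := intervalIntegral.sum_integral_adjacent_intervals (f := P) (μ := volume)
      (a := e) (n := s) (fun k _ => hPint _ _ (henn k) (henn (k+1)))
    rw [he0] at h2
    rw [hψ, hS]
    simp only []
    rw [← h2]
    exact (Finset.sum_congr rfl (fun k _ => (hPblock k).symm)).symm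
  
  -- the Liao kernel estimate
  have hker : ∀ (j : Fin d) (r t : ℝ), 0 < r → r ≤ t →
      φf j t - φf j r ≤ (ψ t - ψ r) + 2*γ*((Δ:ℝ)*Tstar) := by
    intro j r t hr hrt
    have ht : 0 < t := lt_of_lt_of_le hr hrt
    have hb1 := hblk r hr
    have hb2 := hblk t ht
    have hs12 : blk r ≤ blk t := by
      by_contra h
      push_neg at h
      have : e (blk t + 1) ≤ e (blk r) := hemono.monotone (by omega)
      linarith [hb1.1, hb2.2]
    have haP : ∀ (y : ℝ), 0 < y → a j y ≤ P y + γ := by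
      intro y hy
      have := hosc j (jhat (blk y)) y y hy hy
      rw [hP]
      simp only []
      linarith
    have hγΔ : (0:ℝ) ≤ γ*((Δ:ℝ)*Tstar) := by positivity
    have hpiece : ∀ p q : ℝ, 0 < p → p ≤ q → q - p ≤ (Δ:ℝ)*Tstar →
        (∫ y in p..q, a j y) ≤ (∫ y in p..q, P y) + γ*((Δ:ℝ)*Tstar) := by
      intro p q hp hpq hlen
      have h1 : (∫ y in p..q, a j y) ≤ ∫ y in p..q, (P y + γ) := by
        apply intervalIntegral.integral_mono_on hpq (haint j p q hp.le (hp.le.trans hpq))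
          ((hPint p q hp.le (hp.le.trans hpq)).add intervalIntegrable_const)
        intro y hy
        exact haP y (lt_of_lt_of_le hp hy.1)
      have h2 : (∫ y in p..q, (P y + γ)) = (∫ y in p..q, P y) + γ * (q - p) := by
        rw [intervalIntegral.integral_add (hPint p q hp.le (hp.le.trans hpq))
          intervalIntegrable_const, intervalIntegral.integral_const, smul_eq_mul]
        ring
      have h3 : γ * (q - p) ≤ γ * ((Δ:ℝ)*Tstar) := mul_le_mul_of_nonneg_left hlen hγ0
      linarith
    rw [hφadd j r t hr.le ht.le, hψadd r t hr.le ht.le]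
    by_cases hcase : blk r = blk t
    · have hlen : t - r ≤ (Δ:ℝ)*Tstar := by
        have hgap := hegap (blk r)
        have h4 : t ≤ e (blk r + 1) := by rw [hcase]; exact hb2.2
        linarith [hb1.1]
      have := hpiece r t hr hrt hlen
      linarith
    · have hs12' : blk r < blk t := lt_of_le_of_ne hs12 hcase
      have hrE : r ≤ e (blk r + 1) := hb1.2
      have hE0 : (0:ℝ) < e (blk r + 1) := lt_of_lt_of_le hr hrE
      have hEE' : e (blk r + 1) ≤ e (blk t) := hemono.monotone (by omega)
      have hE't : e (blk t) ≤ t := hb2.1.le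
      have hE'pos : (0:ℝ) < e (blk t) := lt_of_lt_of_le he1pos (hemono.monotone (by omega))
      have hsplit : ∀ g : ℝ → ℝ, (∀ p q : ℝ, 0 ≤ p → 0 ≤ q → IntervalIntegrable g volume p q) →
          (∫ y in r..t, g y) = (∫ y in r..(e (blk r + 1)), g y)
            + (∫ y in (e (blk r + 1))..(e (blk t)), g y) + (∫ y in (e (blk t))..t, g y) := by
        intro g hg
        have hA := intervalIntegral.integral_add_adjacent_intervals
          (hg r (e (blk r + 1)) hr.le (henn _)) (hg (e (blk r + 1)) (e (blk t)) (henn _) (henn _))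
        have hB := intervalIntegral.integral_add_adjacent_intervals
          (hg r (e (blk t)) hr.le (henn _)) (hg (e (blk t)) t (henn _) ht.le)
        linarith
      have hsA := hsplit (a j) (fun p q hp hq => haint j p q hp hq)
      have hsP := hsplit P hPint
      have hp1 : (∫ y in r..(e (blk r + 1)), a j y)
          ≤ (∫ y in r..(e (blk r + 1)), P y) + γ*((Δ:ℝ)*Tstar) := by
        apply hpiece r (e (blk r + 1)) hr hrE
        have := hegap (blk r)
        linarith [hb1.1]
      have hp3 : (∫ y in (e (blk t))..t, a j y)
          ≤ (∫ y in (e (blk t))..t, P y) + γ*((Δ:ℝ)*Tstar) := by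
        apply hpiece (e (blk t)) t hE'pos hE't
        have := hegap (blk t)
        linarith [hb2.2]
      have hmid : (∫ y in (e (blk r + 1))..(e (blk t)), a j y)
          ≤ (∫ y in (e (blk r + 1))..(e (blk t)), P y) := by
        have hA := intervalIntegral.sum_integral_adjacent_intervals (f := a j) (μ := volume)
          (a := fun i => e (blk r + 1 + i)) (n := blk t - (blk r + 1))
          (fun i _ => haint j _ _ (henn _) (henn _))
        have hB := intervalIntegral.sum_integral_adjacent_intervals (f := P) (μ := volume)
          (a := fun i => e (blk r + 1 + i)) (n := blk t - (blk r + 1))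
          (fun i _ => hPint _ _ (henn _) (henn _))
        rw [show blk r + 1 + (blk t - (blk r + 1)) = blk t from by omega] at hA hB
        rw [show blk r + 1 + 0 = blk r + 1 from by omega] at hA hB
        rw [← hA, ← hB]
        apply Finset.sum_le_sum
        intro i _
        rw [show blk r + 1 + (i + 1) = (blk r + 1 + i) + 1 from by omega]
        calc (∫ y in (e (blk r + 1 + i))..(e ((blk r + 1 + i) + 1)), a j y)
            ≤ m (blk r + 1 + i) := hmle _ j
          _ = ∫ y in (e (blk r + 1 + i))..(e ((blk r + 1 + i) + 1)), P y := (hPblock _).symm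
      linarith
  -- exponential form of the kernel bound
  set Kc : ℝ := Real.exp (2*γ*((Δ:ℝ)*Tstar)) with hKc
  have hKcpos : 0 < Kc := Real.exp_pos _
  have hkerexp : ∀ (j : Fin d) (r t : ℝ), 0 < r → r ≤ t →
      Real.exp (φf j t - φf j r) ≤ Kc * Real.exp (ψ t - ψ r) := by
    intro j r t hr hrt
    rw [hKc, ← Real.exp_add]
    apply Real.exp_le_exp.2
    linarith [hker j r t hr hrt]
  have hχabs : (0:ℝ) < |χ| := abs_pos.2 (ne_of_lt hχneg)
  have hBeq : χ + (L/δ)*|χ| = χ + L*Kc := by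
    rw [hδ]
    have hexp : Real.exp (-2*γ*(Δ:ℝ)*Tstar) = Kc⁻¹ := by
      rw [hKc, ← Real.exp_neg]
      congr 1
      ring
    rw [hexp]
    have h1 : |χ| ≠ 0 := ne_of_gt hχabs
    have h2 : Kc ≠ 0 := ne_of_gt hKcpos
    field_simp
  -- properties of the perturbation
  have hfbd' : ∀ t > (0:ℝ), ‖fv t‖ ≤ L * ‖x t‖ := fun t ht => hFbd (u t) t ht (x t)
  have hfms : AEStronglyMeasurable fv (volume.restrict (Set.Ioi 0)) := by
    rw [hcover, aestronglyMeasurable_iUnion_iff]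
    intro n
    have hg : ContinuousOn (fun r => F (σ (n+1)) r (x r)) (Set.Ioc (τ n) (τ (n+1))) := by
      have := ContinuousOn.comp (hFcont (σ (n+1)))
        (continuousOn_id.prodMk (hxcont.mono (fun r hr => Set.mem_Ici.2 (hIocsub n hr).le)))
        (fun r hr => ⟨hIocsub n hr, Set.mem_univ _⟩)
      exact this
    refine (hg.aestronglyMeasurable measurableSet_Ioc).congr ?_
    refine (ae_restrict_iff' measurableSet_Ioc).2 (Filter.Eventually.of_forall (fun t ht => ?_))
    rw [hfv]
    simp only []
    rw [hu n t ht]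
  -- the componentwise ODE
  have hxd : ∀ t > (0:ℝ), (∀ n, t ≠ τ n) → ∃ v : EuclideanSpace ℝ (Fin d),
      HasDerivAt x v t ∧ ∀ j, v j = a j t * (x t) j + (fv t) j := by
    intro t ht hne
    refine ⟨_, hxode t ht hne, ?_⟩
    intro j
    have hdiag := hAdiag (u t) t ht
    have hadd : (mulVecE (A (u t) t) (x t) + F (u t) t (x t)) j
        = (mulVecE (A (u t) t) (x t)) j + (F (u t) t (x t)) j := rfl
    rw [hadd]
    have h2 : (mulVecE (A (u t) t) (x t)) j = a j t * (x t) j := by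
      show (Matrix.mulVec (A (u t) t) ((EuclideanSpace.equiv (Fin d) ℝ) (x t))) j
        = a j t * (x t) j
      rw [Matrix.mulVec, dotProduct]
      rw [Finset.sum_eq_single j]
      · rfl
      · intro k _ hk
        rw [hdiag (fun h => hk (h.symm))]
        exact zero_mul _
      · intro h
        exact absurd (Finset.mem_univ j) h
    rw [h2]
  -- the Duhamel formula
  have hid : ∀ (s t : ℝ), 0 < s → s ≤ t → ∀ j, (x t) j
      = Real.exp (φf j t - φf j s) * (x s) j
        + ∫ r in s..t, Real.exp (φf j t - φf j r) * (fv r) j := by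
    intro s t hs hst j
    exact duhamel_scalar τ hτmono hτtop x fv a φf hxcont hfms L hL0 hfbd' α hα
      hφd hφcont hφbd hxd s t hs hst j
  have hfor := vest_fwd x fv φf ψ hxcont hfms L hL0 hfbd' hφcont hψcont Kc hKcpos hkerexp hid
  have hbwd := vest_bwd x fv φf hxcont hfms L hL0 hfbd' hφcont α hα hφlip hid
  
  -- forward Grönwall: the main decay estimate
  have hs₀ : (0:ℝ) < e 1 := he1pos
  set s₀ : ℝ := e 1 with hs₀def
  set z : ℝ → ℝ := fun r => ‖x r‖ * Real.exp (-ψ r) with hz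
  have hzcont : ContinuousOn z (Set.Ici 0) := by
    apply ContinuousOn.mul hxcont.norm
    exact Real.continuous_exp.comp_continuousOn hψcont.neg
  have hznn : ∀ r, 0 ≤ z r := by
    intro r
    rw [hz]
    positivity
  have hmain : ∀ t, s₀ ≤ t →
      ‖x t‖ ≤ (Kc * z s₀) * Real.exp ((Kc*L)*(t - s₀)) * Real.exp (ψ t) := by
    intro t hts
    have hzg : z t ≤ (Kc * z s₀) * Real.exp ((Kc*L)*(t - s₀)) := by
      apply gronwall_fwd (mul_nonneg hKcpos.le hL0) hts
        (hzcont.mono (fun r hr => le_trans hs₀.le hr.1))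
      intro r hr
      exact hfor s₀ r hs₀ hr.1
    have hxt : ‖x t‖ = z t * Real.exp (ψ t) := by
      rw [hz]
      simp only []
      rw [mul_assoc, ← Real.exp_add]
      simp
    rw [hxt]
    exact mul_le_mul_of_nonneg_right hzg (Real.exp_pos _).le
  -- backward estimate
  have hlow : ∀ s t : ℝ, 0 < s → s ≤ t →
      ‖x s‖ * Real.exp (-((α+L)*(t - s))) ≤ ‖x t‖ := by
    intro s t hs hst
    have hG : ‖x s‖ * Real.exp (α*s) ≤ (‖x t‖ * Real.exp (α*t)) * Real.exp (L*(t - s)) := by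
      apply gronwall_bwd hL0 hst
      · exact ContinuousOn.mul ((hxcont.mono (fun r hr => le_trans hs.le hr.1)).norm)
          (Real.continuous_exp.comp_continuousOn (by fun_prop))
      · intro r hr
        exact hbwd r t (lt_of_lt_of_le hs hr.1) hr.2
    have hc := mul_le_mul_of_nonneg_right hG (Real.exp_pos (-(α*s) - L*(t-s) - α*(t-s))).le
    calc ‖x s‖ * Real.exp (-((α+L)*(t-s)))
        = ‖x s‖ * Real.exp (α*s) * Real.exp (-(α*s) - L*(t-s) - α*(t-s)) := by
          rw [mul_assoc, ← Real.exp_add]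
          congr 2
          ring
      _ ≤ ‖x t‖ * Real.exp (α*t) * Real.exp (L*(t-s)) * Real.exp (-(α*s) - L*(t-s) - α*(t-s)) := hc
      _ = ‖x t‖ * Real.exp (α*t + (L*(t-s) + (-(α*s) - L*(t-s) - α*(t-s)))) := by
          rw [mul_assoc, mul_assoc, ← Real.exp_add, ← Real.exp_add]
      _ = ‖x t‖ := by
          rw [show α*t + (L*(t-s) + (-(α*s) - L*(t-s) - α*(t-s))) = 0 from by ring,
            Real.exp_zero, mul_one]
  have hlow0 : ∀ t : ℝ, 0 < t → ‖x₀‖ * Real.exp (-((α+L)*t)) ≤ ‖x t‖ := by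
    intro t ht
    set sn : ℕ → ℝ := fun n => min t (1/(n+1)) with hsn
    have hsnpos : ∀ n, 0 < sn n := fun n => lt_min ht (by positivity)
    have hsnle : ∀ n, sn n ≤ t := fun n => min_le_left _ _
    have hsn0 : Filter.Tendsto sn Filter.atTop (nhds 0) := by
      apply squeeze_zero (fun n => (hsnpos n).le) (fun n => min_le_right _ _)
      exact tendsto_one_div_add_atTop_nhds_zero_nat
    have hxc0 : Filter.Tendsto (fun n => ‖x (sn n)‖) Filter.atTop (nhds ‖x₀‖) := by
      have h1 : Filter.Tendsto sn Filter.atTop (nhdsWithin 0 (Set.Ici 0)) := by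
        apply tendsto_nhdsWithin_of_tendsto_nhds_of_eventually_within _ hsn0
        exact Filter.Eventually.of_forall (fun n => (hsnpos n).le)
      have h2 := (hxcont 0 Set.self_mem_Ici).tendsto.comp h1
      rw [hx0] at h2
      exact (Continuous.tendsto continuous_norm _).comp h2
    have hec : Filter.Tendsto (fun n => Real.exp (-((α+L)*(t - sn n)))) Filter.atTop
        (nhds (Real.exp (-((α+L)*t)))) := by
      apply (Real.continuous_exp.tendsto _).comp
      have h1 : Filter.Tendsto (fun n => t - sn n) Filter.atTop (nhds t) := by
        simpa using (tendsto_const_nhds (x := t)).sub hsn0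
      have h3 := h1.const_mul (α+L)
      simpa using h3.neg
    have hprod := hxc0.mul hec
    exact le_of_tendsto hprod (Filter.Eventually.of_forall
      (fun n => hlow (sn n) t (hsnpos n) (hsnle n)))
  -- eventual linear bound on ψ
  have hψev : ∀ ε : ℝ, 0 < ε → ∀ᶠ t : ℝ in Filter.atTop, ψ t ≤ (χ + ε) * t := by
    intro ε hε
    have hbddS : Filter.IsBoundedUnder (· ≤ ·) Filter.atTop (fun s : ℕ => (e s)⁻¹ * S s) := by
      refine ⟨α, ?_⟩
      rw [Filter.eventually_map]
      filter_upwards [Filter.eventually_ge_atTop 1] with s hs1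
      have hes : (0:ℝ) < e s := he0 ▸ hemono (by omega)
      have h1 : S s ≤ α * e s := le_trans (le_abs_self _) (hSabs s)
      calc (e s)⁻¹ * S s ≤ (e s)⁻¹ * (α * e s) := by
            apply mul_le_mul_of_nonneg_left h1 (by positivity)
        _ = α := by field_simp
    have hev1 : ∀ᶠ s : ℕ in Filter.atTop, (e s)⁻¹ * S s < χ + ε/2 := by
      apply Filter.eventually_lt_of_limsup_lt _ hbddS
      rw [← hχ']
      linarith
    have hev2 : ∀ᶠ t : ℝ in Filter.atTop,
        α*((Δ:ℝ)*Tstar) + |χ + ε/2| * ((Δ:ℝ)*Tstar) ≤ (ε/2) * t := by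
      apply Filter.Tendsto.eventually_ge_atTop
      exact Filter.Tendsto.const_mul_atTop (half_pos hε) Filter.tendsto_id
    filter_upwards [hblktop.eventually hev1, hblktop.eventually (Filter.eventually_ge_atTop 1),
      Filter.eventually_gt_atTop 0, hev2] with t hS1 hblk1 ht0 hC
    have hb := hblk t ht0
    have hes : (0:ℝ) < e (blk t) := he0 ▸ hemono (by omega)
    have hSle : S (blk t) ≤ (χ + ε/2) * e (blk t) := by
      have h2 := mul_le_mul_of_nonneg_left hS1.le hes.le
      rw [← mul_assoc, mul_inv_cancel₀ (ne_of_gt hes), one_mul] at h2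
      linarith
    have hgap : t - e (blk t) ≤ (Δ:ℝ)*Tstar := by
      have := hegap (blk t)
      linarith [hb.2]
    have hψt : ψ t ≤ S (blk t) + α*((Δ:ℝ)*Tstar) := by
      have h3 := hψadd (e (blk t)) t (henn _) ht0.le
      have h4 := hPintabs (e (blk t)) t (henn _) hb.1.le
      rw [← h3] at h4
      rw [abs_le] at h4
      have h5 := hψS (blk t)
      have h6 : α * (t - e (blk t)) ≤ α*((Δ:ℝ)*Tstar) := mul_le_mul_of_nonneg_left hgap hα.le
      linarith [h4.2]
    have habs2 : (χ + ε/2) * e (blk t) ≤ (χ + ε/2)*t + |χ + ε/2| * ((Δ:ℝ)*Tstar) := by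
      have h8 : -((χ + ε/2)*(t - e (blk t))) ≤ |χ + ε/2| * ((Δ:ℝ)*Tstar) := by
        calc -((χ + ε/2)*(t - e (blk t))) ≤ |(χ + ε/2)*(t - e (blk t))| := neg_le_abs _
          _ = |χ + ε/2| * |t - e (blk t)| := abs_mul _ _
          _ = |χ + ε/2| * (t - e (blk t)) := by
              rw [abs_of_nonneg (show (0:ℝ) ≤ t - e (blk t) from by linarith [hb.1])]
          _ ≤ |χ + ε/2| * ((Δ:ℝ)*Tstar) := mul_le_mul_of_nonneg_left hgap (abs_nonneg _)
      linarith
    calc ψ t ≤ S (blk t) + α*((Δ:ℝ)*Tstar) := hψt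
      _ ≤ (χ + ε/2)*e (blk t) + α*((Δ:ℝ)*Tstar) := by linarith
      _ ≤ (χ + ε/2)*t + (ε/2)*t := by linarith
      _ = (χ + ε)*t := by ring
  -- Part 2
  have hpart2 : ∀ c : ℝ, χ + L*Kc < c → ∀ᶠ t : ℝ in Filter.atTop, ‖x t‖ ≤ Real.exp (c * t) := by
    intro c hc
    set ε : ℝ := (c - (χ + L*Kc))/2 with hεdef
    have hε : 0 < ε := by rw [hεdef]; linarith
    set C₂ : ℝ := (Kc * z s₀) * Real.exp (-((Kc*L)*s₀)) with hC₂
    have hC₂nn : 0 ≤ C₂ := by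
      rw [hC₂]
      have := hznn s₀
      positivity
    have hev3 : ∀ᶠ t : ℝ in Filter.atTop, C₂ ≤ Real.exp (ε * t) := by
      apply Filter.Tendsto.eventually_ge_atTop
      exact Real.tendsto_exp_atTop.comp (Filter.Tendsto.const_mul_atTop hε Filter.tendsto_id)
    filter_upwards [hψev ε hε, hev3, Filter.eventually_ge_atTop s₀] with t h1 h2 h3
    have h4 := hmain t h3
    have e1 : (Kc * z s₀) * Real.exp ((Kc*L)*(t - s₀))
        = C₂ * Real.exp ((Kc*L)*t) := by
      have h9 : Real.exp (-((Kc*L)*s₀)) * Real.exp ((Kc*L)*t) = Real.exp ((Kc*L)*(t - s₀)) := by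
        rw [← Real.exp_add]
        congr 1
        ring
      calc (Kc * z s₀) * Real.exp ((Kc*L)*(t - s₀))
          = (Kc * z s₀) * (Real.exp (-((Kc*L)*s₀)) * Real.exp ((Kc*L)*t)) := by rw [h9]
        _ = C₂ * Real.exp ((Kc*L)*t) := by rw [hC₂]; ring
    rw [e1] at h4
    have h5 : C₂ * Real.exp ((Kc*L)*t) * Real.exp (ψ t)
        ≤ C₂ * Real.exp ((Kc*L)*t) * Real.exp ((χ + ε)*t) := by
      apply mul_le_mul_of_nonneg_left (Real.exp_le_exp.2 h1)
      exact mul_nonneg hC₂nn (Real.exp_pos _).le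
    have h6 : C₂ * Real.exp ((Kc*L)*t) * Real.exp ((χ + ε)*t)
        ≤ Real.exp (ε*t) * Real.exp ((Kc*L)*t) * Real.exp ((χ + ε)*t) := by
      apply mul_le_mul_of_nonneg_right
        (mul_le_mul_of_nonneg_right h2 (Real.exp_pos _).le) (Real.exp_pos _).le
    have h7 : Real.exp (ε*t) * Real.exp ((Kc*L)*t) * Real.exp ((χ + ε)*t)
        = Real.exp (c*t) := by
      rw [← Real.exp_add, ← Real.exp_add]
      congr 1
      rw [hεdef]
      ring
    linarith
  -- Part 3
  have hpart3 : χ + L*Kc < 0 := by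
    have h1 : L * Kc < |χ| := by
      rw [hδ] at hLδ
      have hexp : Real.exp (-2*γ*(Δ:ℝ)*Tstar) = Kc⁻¹ := by
        rw [hKc, ← Real.exp_neg]
        congr 1
        ring
      rw [hexp] at hLδ
      have h2 := mul_lt_mul_of_pos_right hLδ hKcpos
      rwa [mul_assoc, inv_mul_cancel₀ (ne_of_gt hKcpos), mul_one] at h2
    have h2 : |χ| = -χ := abs_of_neg hχneg
    linarith
  -- Part 1
  have hpart1 : x₀ ≠ 0 → Filter.limsup (fun t : ℝ => Real.log ‖x t‖ / t) Filter.atTop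
      ≤ χ + L*Kc := by
    intro hx₀ne
    have hx₀pos : 0 < ‖x₀‖ := norm_pos_iff.2 hx₀ne
    have hxpos : ∀ t : ℝ, 0 < t → 0 < ‖x t‖ := by
      intro t ht
      exact lt_of_lt_of_le (by positivity) (hlow0 t ht)
    have hlb : ∀ᶠ t : ℝ in Filter.atTop,
        -((α+L) + |Real.log ‖x₀‖|) ≤ Real.log ‖x t‖ / t := by
      filter_upwards [Filter.eventually_ge_atTop 1] with t ht1
      have ht0 : (0:ℝ) < t := by linarith
      have h1 : Real.log (‖x₀‖ * Real.exp (-((α+L)*t))) ≤ Real.log ‖x t‖ :=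
        Real.log_le_log (by positivity) (hlow0 t ht0)
      rw [Real.log_mul (ne_of_gt hx₀pos) (ne_of_gt (Real.exp_pos _)), Real.log_exp] at h1
      have h2 : (Real.log ‖x₀‖ + -((α+L)*t)) / t ≤ Real.log ‖x t‖ / t := by gcongr
      have h3 : (Real.log ‖x₀‖ + -((α+L)*t)) / t = Real.log ‖x₀‖ / t - (α+L) := by
        field_simp
        ring
      have h4 : -|Real.log ‖x₀‖| ≤ Real.log ‖x₀‖ / t := by
        rcases le_or_gt 0 (Real.log ‖x₀‖) with h | h
        · have h5 : 0 ≤ Real.log ‖x₀‖ / t := by positivity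
          linarith [abs_nonneg (Real.log ‖x₀‖)]
        · have h5 : Real.log ‖x₀‖ ≤ Real.log ‖x₀‖ / t := by
            rw [le_div_iff₀ ht0]
            nlinarith
          linarith [neg_abs_le (Real.log ‖x₀‖)]
      rw [h3] at h2
      linarith
    have hcob : Filter.IsCoboundedUnder (· ≤ ·) Filter.atTop
        (fun t : ℝ => Real.log ‖x t‖ / t) := by
      apply Filter.IsBoundedUnder.isCoboundedUnder_le
      exact ⟨-((α+L) + |Real.log ‖x₀‖|), by rw [Filter.eventually_map]; exact hlb⟩
    have key : ∀ c : ℝ, χ + L*Kc < c →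
        Filter.limsup (fun t : ℝ => Real.log ‖x t‖ / t) Filter.atTop ≤ c := by
      intro c hc
      apply Filter.limsup_le_of_le hcob
      filter_upwards [hpart2 c hc, Filter.eventually_gt_atTop 0] with t h1 h2
      have h3 : Real.log ‖x t‖ ≤ c * t := by
        calc Real.log ‖x t‖ ≤ Real.log (Real.exp (c*t)) := Real.log_le_log (hxpos t h2) h1
          _ = c * t := Real.log_exp _
      rw [div_le_iff₀ h2]
      linarith
    by_contra hcon
    push_neg at hcon
    obtain ⟨c, hc1, hc2⟩ := exists_between hcon
    exact absurd (key c hc1) (not_le.2 hc2)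
  refine ⟨?_, ?_, ?_⟩
  · intro h
    rw [hBeq]
    exact hpart1 h
  · intro c hc
    rw [hBeq] at hc
    exact hpart2 c hc
  · rw [hBeq]
    exact hpart3
end

section
/- The maximal Lyapunov exponent λ := max_{1≤j≤d} limsup_{T→∞} (1/T) ∫_0^T A_{u(t)}^{jj}(t) dt satisfies λ ≤ χ for every Δ-sequence {n_s}, i.e., the maximal Lyapunov exponent of the linear switched system is bounded above by each of its Liao-type exponents. -/
open Filter MeasureTheory Set

lemma euclidean_abs_apply_le_norm {d : ℕ} (x : EuclideanSpace ℝ (Fin d)) (j : Fin d) :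
    |x j| ≤ ‖x‖ := by
  have h1 := EuclideanSpace.norm_eq x
  simp only [Real.norm_eq_abs, sq_abs] at h1
  rw [← Real.sqrt_sq_eq_abs, h1]
  apply Real.sqrt_le_sqrt
  exact Finset.single_le_sum (f := fun i => (x i) ^ 2) (fun i _ => sq_nonneg _)
    (Finset.mem_univ j)

lemma mulVecE_single_apply {d : ℕ} (M : Matrix (Fin d) (Fin d) ℝ) (j : Fin d) :
    mulVecE M (EuclideanSpace.single j (1 : ℝ)) j = M j j := by
  simp [mulVecE, Matrix.mulVec_single, Matrix.mulVec, dotProduct]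

/-- the maximal Lyapunov exponent `λ` of the linear switched system is
bounded above by every Liao-type exponent `χ` (one for each Δ-sequence). -/
theorem stmt2
    {d : ℕ} (hd : 2 ≤ d) {I : Type*}
    (A : I → ℝ → Matrix (Fin d) (Fin d) ℝ)
    (α Tstar : ℝ) (hα : 0 < α) (hT : 0 < Tstar)
    (hAcont : ∀ i, ContinuousOn (A i) (Set.Ioi (0:ℝ)))
    (hAnorm : ∀ i, ∀ t > (0:ℝ), ∀ v : EuclideanSpace ℝ (Fin d),
      ‖mulVecE (A i t) v‖ ≤ α * ‖v‖)
    (τ : ℕ → ℝ) (hτ0 : τ 0 = 0) (hτmono : StrictMono τ)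
    (hτtop : Filter.Tendsto τ Filter.atTop Filter.atTop)
    (hτgap : ∀ n : ℕ, τ (n+1) - τ n ≤ Tstar)
    (σ : ℕ → I) (u : ℝ → I)
    (hu : ∀ n : ℕ, ∀ t ∈ Set.Ioc (τ n) (τ (n+1)), u t = σ (n+1))
    (Δ : ℕ) (hΔ : 0 < Δ)
    (nseq : ℕ → ℕ) (hn0 : nseq 0 = 0) (hnmono : StrictMono nseq)
    (hngap : ∀ s : ℕ, nseq (s+1) - nseq s ≤ Δ)
    (lam χ : ℝ)
    (hlam : lam = ⨆ j : Fin d, Filter.limsup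
        (fun T : ℝ => (1 / T) * ∫ t in (0:ℝ)..T, A (u t) t j j) Filter.atTop)
    (hχ : χ = Filter.limsup (fun s : ℕ =>
        (τ (nseq s))⁻¹ * ∑ k ∈ Finset.range s, ⨆ j : Fin d,
          ∫ t in (τ (nseq k))..(τ (nseq (k+1))), A (u t) t j j) Filter.atTop) :
    lam ≤ χ := by
  classical
  haveI : Nonempty (Fin d) := ⟨⟨0, by omega⟩⟩
  set g : ℕ → ℝ := fun s : ℕ =>
      (τ (nseq s))⁻¹ * ∑ k ∈ Finset.range s, ⨆ j : Fin d,
        ∫ t in (τ (nseq k))..(τ (nseq (k+1))), A (u t) t j j with hgdef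
  -- basic positivity facts
  have hτnn : ∀ n, 0 ≤ τ n := fun n => hτ0 ▸ hτmono.monotone (Nat.zero_le n)
  have hτpos : ∀ s : ℕ, 1 ≤ s → 0 < τ (nseq s) := by
    intro s hs
    have h1 : 0 < nseq s := by
      have := hnmono (show 0 < s by omega); omega
    calc (0:ℝ) = τ 0 := hτ0.symm
      _ < τ (nseq s) := hτmono h1
  -- diagonal entries are bounded by α
  have habs : ∀ (i : I), ∀ t > (0:ℝ), ∀ j : Fin d, |A i t j j| ≤ α := by
    intro i t ht j
    have h1 := hAnorm i t ht (EuclideanSpace.single j (1:ℝ))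
    rw [EuclideanSpace.norm_single] at h1
    have h2 := euclidean_abs_apply_le_norm (mulVecE (A i t) (EuclideanSpace.single j (1:ℝ))) j
    rw [mulVecE_single_apply] at h2
    simpa using h2.trans h1
  have hfb : ∀ t > (0:ℝ), ∀ j : Fin d, |A (u t) t j j| ≤ α :=
    fun t ht j => habs (u t) t ht j
  -- integrability on each switching interval
  have hInt1 : ∀ (j : Fin d) (n : ℕ),
      IntegrableOn (fun t => A (u t) t j j) (Ioc (τ n) (τ (n+1))) := by
    intro j n
    have hsub : Ioc (τ n) (τ (n+1)) ⊆ Ioi (0:ℝ) :=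
      fun t ht => lt_of_le_of_lt (hτnn n) ht.1
    have hcont : ContinuousOn (fun t => A (σ (n+1)) t j j) (Ioc (τ n) (τ (n+1))) := by
      have h2 : Continuous (fun M : Matrix (Fin d) (Fin d) ℝ => M j j) :=
        continuous_id.matrix_elem j j
      exact h2.comp_continuousOn ((hAcont _).mono hsub)
    have h0 : IntegrableOn (fun t => A (σ (n+1)) t j j) (Ioc (τ n) (τ (n+1))) := by
      refine Integrable.mono' (g := fun _ => α)
        (integrableOn_const measure_Ioc_lt_top.ne)
        ((hcont.aemeasurable measurableSet_Ioc).aestronglyMeasurable) ?_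
      filter_upwards [ae_restrict_mem measurableSet_Ioc] with t ht
      rw [Real.norm_eq_abs]
      exact habs _ t (hsub ht) j
    refine h0.congr_fun (fun t ht => ?_) measurableSet_Ioc
    rw [hu n t ht]
  -- integrability on [0, τ N]
  have hIntN : ∀ (j : Fin d) (N : ℕ),
      IntegrableOn (fun t => A (u t) t j j) (Ioc 0 (τ N)) := by
    intro j N
    induction N with
    | zero => rw [hτ0]; simp
    | succ N ih =>
      rw [← Set.Ioc_union_Ioc_eq_Ioc (hτnn N) (hτmono (Nat.lt_succ_self N)).le]
      exact ih.union (hInt1 j N)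
  -- interval integrability on any [a,b] with 0 ≤ a ≤ b
  have hInt : ∀ (j : Fin d) (a b : ℝ), 0 ≤ a → a ≤ b →
      IntervalIntegrable (fun t => A (u t) t j j) volume a b := by
    intro j a b ha hab
    obtain ⟨N, hN⟩ := (hτtop.eventually_ge_atTop b).exists
    rw [intervalIntegrable_iff_integrableOn_Ioc_of_le hab]
    exact (hIntN j N).mono_set (Set.Ioc_subset_Ioc ha hN)
  -- upper and lower bounds on integrals
  have hIub : ∀ (j : Fin d) (a b : ℝ), 0 ≤ a → a ≤ b →
      (∫ t in a..b, A (u t) t j j) ≤ α * (b - a) := by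
    intro j a b ha hab
    rw [intervalIntegral.integral_of_le hab]
    have h1 : (∫ t in Ioc a b, A (u t) t j j) ≤ ∫ _t in Ioc a b, α := by
      refine setIntegral_mono_on
        ((intervalIntegrable_iff_integrableOn_Ioc_of_le hab).1 (hInt j a b ha hab))
        (integrableOn_const measure_Ioc_lt_top.ne) measurableSet_Ioc ?_
      intro t ht
      exact (abs_le.1 (hfb t (lt_of_le_of_lt ha ht.1) j)).2
    refine h1.trans ?_
    rw [setIntegral_const, Real.volume_real_Ioc_of_le hab,
      smul_eq_mul, mul_comm]
  have hIlb : ∀ (j : Fin d) (a b : ℝ), 0 ≤ a → a ≤ b →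
      -α * (b - a) ≤ ∫ t in a..b, A (u t) t j j := by
    intro j a b ha hab
    rw [intervalIntegral.integral_of_le hab]
    have h1 : (∫ _t in Ioc a b, (-α)) ≤ ∫ t in Ioc a b, A (u t) t j j := by
      refine setIntegral_mono_on (integrableOn_const measure_Ioc_lt_top.ne)
        ((intervalIntegrable_iff_integrableOn_Ioc_of_le hab).1 (hInt j a b ha hab))
        measurableSet_Ioc ?_
      intro t ht
      exact neg_le_of_abs_le (hfb t (lt_of_le_of_lt ha ht.1) j)
    refine le_trans ?_ h1
    rw [setIntegral_const, Real.volume_real_Ioc_of_le hab,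
      smul_eq_mul, mul_comm]
  -- telescoping length
  have hlen : ∀ s : ℕ, ∑ k ∈ Finset.range s, (τ (nseq (k+1)) - τ (nseq k)) = τ (nseq s) := by
    intro s
    rw [Finset.sum_range_sub (fun k => τ (nseq k)) s, hn0, hτ0, sub_zero]
  -- bounds for g
  have hgub : ∀ s : ℕ, g s ≤ α := by
    intro s
    rcases Nat.eq_zero_or_pos s with h | h
    · subst h; simp [hgdef]; exact hα.le
    · have hc0 := hτpos s h
      have hsum : (∑ k ∈ Finset.range s, ⨆ j : Fin d,
          ∫ t in (τ (nseq k))..(τ (nseq (k+1))), A (u t) t j j) ≤ α * τ (nseq s) := by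
        calc (∑ k ∈ Finset.range s, ⨆ j : Fin d,
              ∫ t in (τ (nseq k))..(τ (nseq (k+1))), A (u t) t j j)
            ≤ ∑ k ∈ Finset.range s, α * (τ (nseq (k+1)) - τ (nseq k)) := by
              refine Finset.sum_le_sum fun k _ => ciSup_le fun j =>
                hIub j _ _ (hτnn _) (hτmono (hnmono (Nat.lt_succ_self k))).le
          _ = α * τ (nseq s) := by rw [← Finset.mul_sum, hlen s]
      calc g s ≤ (τ (nseq s))⁻¹ * (α * τ (nseq s)) := by
            simp only [hgdef]
            exact mul_le_mul_of_nonneg_left hsum (inv_nonneg.2 hc0.le)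
        _ = α := by field_simp
  have hglb : ∀ s : ℕ, -α ≤ g s := by
    intro s
    rcases Nat.eq_zero_or_pos s with h | h
    · subst h; simp [hgdef]; linarith
    · have hc0 := hτpos s h
      have hsum : -α * τ (nseq s) ≤ ∑ k ∈ Finset.range s, ⨆ j : Fin d,
          ∫ t in (τ (nseq k))..(τ (nseq (k+1))), A (u t) t j j := by
        calc -α * τ (nseq s)
            = ∑ k ∈ Finset.range s, -α * (τ (nseq (k+1)) - τ (nseq k)) := by
              rw [← Finset.mul_sum, hlen s]
          _ ≤ ∑ k ∈ Finset.range s, ⨆ j : Fin d,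
              ∫ t in (τ (nseq k))..(τ (nseq (k+1))), A (u t) t j j := by
              refine Finset.sum_le_sum fun k _ => ?_
              refine le_trans (hIlb ⟨0, by omega⟩ _ _ (hτnn _)
                (hτmono (hnmono (Nat.lt_succ_self k))).le) ?_
              exact le_ciSup (f := fun j' : Fin d =>
                ∫ t in (τ (nseq k))..(τ (nseq (k+1))), A (u t) t j' j')
                (Set.Finite.bddAbove (Set.finite_range _)) ⟨0, by omega⟩
      calc -α = (τ (nseq s))⁻¹ * (-α * τ (nseq s)) := by field_simp
        _ ≤ g s := by
            simp only [hgdef]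
            exact mul_le_mul_of_nonneg_left hsum (inv_nonneg.2 hc0.le)
  -- additivity of the integral over blocks
  have hadd : ∀ (j : Fin d) (s : ℕ),
      (∫ t in (0:ℝ)..(τ (nseq s)), A (u t) t j j)
        = ∑ k ∈ Finset.range s, ∫ t in (τ (nseq k))..(τ (nseq (k+1))), A (u t) t j j := by
    intro j s
    induction s with
    | zero => simp [hn0, hτ0]
    | succ s ih =>
      rw [Finset.sum_range_succ, ← ih]
      exact (intervalIntegral.integral_add_adjacent_intervals
        (hInt j 0 (τ (nseq s)) le_rfl (hτnn _))
        (hInt j (τ (nseq s)) (τ (nseq (s+1))) (hτnn _)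
          (hτmono (hnmono (Nat.lt_succ_self s))).le)).symm
  -- key comparison with g
  have hkey : ∀ (j : Fin d) (s : ℕ), 1 ≤ s →
      (∫ t in (0:ℝ)..(τ (nseq s)), A (u t) t j j) ≤ τ (nseq s) * g s := by
    intro j s hs
    have hc0 := hτpos s hs
    rw [hadd j s]
    have h1 : (∑ k ∈ Finset.range s, ∫ t in (τ (nseq k))..(τ (nseq (k+1))), A (u t) t j j)
        ≤ ∑ k ∈ Finset.range s, ⨆ j' : Fin d,
            ∫ t in (τ (nseq k))..(τ (nseq (k+1))), A (u t) t j' j' :=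
      Finset.sum_le_sum fun k _ => le_ciSup (f := fun j' : Fin d =>
        ∫ t in (τ (nseq k))..(τ (nseq (k+1))), A (u t) t j' j')
        (Set.Finite.bddAbove (Set.finite_range _)) j
    refine h1.trans_eq ?_
    simp only [hgdef]
    rw [← mul_assoc, mul_inv_cancel₀ hc0.ne', one_mul]
  -- gap between consecutive τ (nseq ·)
  have hτseg : ∀ n k : ℕ, τ (n + k) - τ n ≤ (k : ℝ) * Tstar := by
    intro n k
    induction k with
    | zero => simp
    | succ k ih =>
      have h1 := hτgap (n + k)
      have h2 : n + (k + 1) = (n + k) + 1 := by omega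
      rw [h2]
      push_cast
      linarith
  have hgap2 : ∀ s : ℕ, τ (nseq (s+1)) - τ (nseq s) ≤ (Δ : ℝ) * Tstar := by
    intro s
    have h1 : nseq s ≤ nseq (s+1) := (hnmono (Nat.lt_succ_self s)).le
    have h2 := hτseg (nseq s) (nseq (s+1) - nseq s)
    rw [Nat.add_sub_cancel' h1] at h2
    refine h2.trans ?_
    have h3 : ((nseq (s+1) - nseq s : ℕ) : ℝ) ≤ (Δ : ℝ) := Nat.cast_le.2 (hngap s)
    exact mul_le_mul_of_nonneg_right h3 hT.le
  set C := (Δ : ℝ) * Tstar with hC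
  have hC0 : 0 < C := by positivity
  -- main claim: each coordinate limsup is ≤ χ
  have main : ∀ j : Fin d, Filter.limsup
      (fun T : ℝ => (1 / T) * ∫ t in (0:ℝ)..T, A (u t) t j j) Filter.atTop ≤ χ := by
    intro j
    have hcob : IsCoboundedUnder (· ≤ ·) atTop
        (fun T : ℝ => (1 / T) * ∫ t in (0:ℝ)..T, A (u t) t j j) := by
      refine Filter.isCoboundedUnder_le_of_eventually_le atTop (x := -α) ?_
      filter_upwards [Filter.eventually_ge_atTop (1:ℝ)] with T hT1
      have hT0 : (0:ℝ) < T := lt_of_lt_of_le one_pos hT1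
      have h1 := hIlb j 0 T le_rfl hT0.le
      rw [sub_zero] at h1
      have h2 : (1 / T) * (-α * T) ≤ (1 / T) * ∫ t in (0:ℝ)..T, A (u t) t j j :=
        mul_le_mul_of_nonneg_left h1 (by positivity)
      calc -α = (1 / T) * (-α * T) := by field_simp
        _ ≤ _ := h2
    refine le_of_forall_pos_le_add fun ε hε => ?_
    refine Filter.limsup_le_of_le hcob ?_
    -- eventually bound
    have hbddg : IsBoundedUnder (· ≤ ·) atTop g := isBoundedUnder_of ⟨α, hgub⟩
    have hlim : Filter.limsup g atTop < χ + ε / 2 := by rw [← hχ]; linarith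
    obtain ⟨S, hS⟩ := Filter.eventually_atTop.1 (Filter.eventually_lt_of_limsup_lt hlim hbddg)
    filter_upwards [Filter.eventually_ge_atTop (1:ℝ),
      Filter.eventually_ge_atTop (τ (nseq (S+1))),
      Filter.eventually_ge_atTop (4 * α * C / ε)] with T hT1 hTS hTC
    have hT0 : (0:ℝ) < T := lt_of_lt_of_le one_pos hT1
    -- find the block containing T
    obtain ⟨s, hs1, hs2⟩ : ∃ s, τ (nseq s) ≤ T ∧ T < τ (nseq (s+1)) := by
      have hPex : ∃ m, T < τ (nseq m) :=
        ((hτtop.comp hnmono.tendsto_atTop).eventually_gt_atTop T).exists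
      have hfind := Nat.find_spec hPex
      have h0 : Nat.find hPex ≠ 0 := by
        intro h; rw [h, hn0, hτ0] at hfind; linarith
      obtain ⟨s, hseq⟩ := Nat.exists_eq_succ_of_ne_zero h0
      refine ⟨s, ?_, by have h5 : s + 1 = Nat.find hPex := by omega
                        rw [h5]; exact hfind⟩
      by_contra hcon
      exact Nat.find_min hPex (by omega) (lt_of_not_ge hcon)
    have hsS : S < s := by
      have h1 : τ (nseq (S+1)) < τ (nseq (s+1)) := lt_of_le_of_lt hTS hs2
      have h2 : S + 1 < s + 1 := (hτmono.comp hnmono).lt_iff_lt.mp h1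
      omega
    have hs_ge1 : 1 ≤ s := by omega
    have hc0 : 0 < τ (nseq s) := hτpos s hs_ge1
    have hTc : T - τ (nseq s) ≤ C := by
      have := hgap2 s; linarith
    have hsplit : (∫ t in (0:ℝ)..T, A (u t) t j j)
        = (∫ t in (0:ℝ)..(τ (nseq s)), A (u t) t j j)
          + ∫ t in (τ (nseq s))..T, A (u t) t j j :=
      (intervalIntegral.integral_add_adjacent_intervals
        (hInt j 0 (τ (nseq s)) le_rfl hc0.le) (hInt j (τ (nseq s)) T hc0.le hs1)).symm
    have h1 := hkey j s hs_ge1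
    have h2 := hIub j (τ (nseq s)) T hc0.le hs1
    have hgs : g s < χ + ε / 2 := hS s (by omega)
    have hglbs := hglb s
    have hTC' : 4 * α * C ≤ T * ε := by
      rw [div_le_iff₀ hε] at hTC; linarith
    have h3 : τ (nseq s) * g s + α * (T - τ (nseq s)) ≤ T * g s + 2 * α * C := by
      nlinarith [mul_nonneg (sub_nonneg.2 hs1) (show (0:ℝ) ≤ g s + α by linarith),
        mul_le_mul_of_nonneg_left hTc hα.le]
    have h4 : 2 * α * C ≤ (ε / 2) * T := by nlinarith
    have h5 : (1 / T) * ∫ t in (0:ℝ)..T, A (u t) t j j ≤ g s + ε / 2 := by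
      rw [hsplit]
      calc (1 / T) * ((∫ t in (0:ℝ)..(τ (nseq s)), A (u t) t j j)
              + ∫ t in (τ (nseq s))..T, A (u t) t j j)
          ≤ (1 / T) * (T * g s + (ε / 2) * T) := by
            refine mul_le_mul_of_nonneg_left ?_ (by positivity)
            linarith
        _ = g s + ε / 2 := by field_simp
    linarith
  rw [hlam]
  exact ciSup_le main
end

section
/- Let A_0 = diag(1, −2) and A_1 = diag(−2, 1) in ℝ^{2×2}, let τ_n = n, σ(n) = 0 for n odd and σ(n) = 1 for n even, and u(t) = σ(n) for n−1 < t ≤ n. Then with the Δ-sequence n_s = s (Δ = 1), the Liao-type exponent equals 1; that is, limsup_{s→∞} (1/s) Σ_{k=1}^s max_{j∈{1,2}} ∫_{k−1}^{k} A_{u(t)}^{jj} dt = 1 (each term max_j ∫_{k−1}^{k} A_{u(t)}^{jj} dt equals 1). Hence for this exponentially stable system the Liao-type exponent associated with n_s = s is positive, while the one associated with n_s = 2s equals the true maximal Lyapunov exponent −1/2: the choice of the Δ-sequence matters. -/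
/-- `A₀ = diag(1, −2)`. -/
noncomputable def A0 : Matrix (Fin 2) (Fin 2) ℝ := Matrix.diagonal ![1, -2]

/-- `A₁ = diag(−2, 1)`. -/
noncomputable def A1 : Matrix (Fin 2) (Fin 2) ℝ := Matrix.diagonal ![-2, 1]

open MeasureTheory intervalIntegral Set

lemma int_const_on (a c : ℝ) (f : ℝ → ℝ) (h : ∀ t ∈ Set.Ioc a (a+1), f t = c) :
    ∫ t in a..(a+1), f t = c := by
  rw [intervalIntegral.integral_of_le (by linarith),
    MeasureTheory.setIntegral_congr_fun measurableSet_Ioc h]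
  simp

lemma intble_const_on (a b c : ℝ) (hab : a ≤ b) (f : ℝ → ℝ)
    (h : ∀ t ∈ Set.Ioc a b, f t = c) : IntervalIntegrable f volume a b := by
  refine (_root_.intervalIntegrable_const (c := c)).congr ?_
  rw [Set.uIoc_of_le hab]
  exact fun t ht => (h t ht).symm

lemma sup_two (g : Fin 2 → ℝ) (h1 : ∃ j, g j = 1) (hle : ∀ j, g j ≤ 1) :
    ⨆ j, g j = 1 := by
  obtain ⟨j, hj⟩ := h1
  refine le_antisymm (ciSup_le hle) ?_
  calc (1:ℝ) = g j := hj.symm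
    _ ≤ ⨆ j, g j := le_ciSup (Set.Finite.bddAbove (Set.finite_range g)) j

set_option linter.unnecessarySeqFocus false

/-- for the periodic switching law alternating `A₀, A₁` on unit
intervals, the Liao-type exponent associated with the Δ-sequence `n_s = s`
(`Δ = 1`, the Dai–Huang–Xiao exponent) equals `1`: each term
`max_j ∫_{k−1}^{k} A_{u(t)}^{jj} dt` equals `1` and the limsup equals `1`,
whereas the Liao-type exponent associated with `n_s = 2s` equals `−1/2`. -/
theorem stmt13
    (Au : ℝ → Matrix (Fin 2) (Fin 2) ℝ)
    (hAu : ∀ n : ℕ, ∀ t ∈ Set.Ioc ((n : ℝ)) ((n : ℝ) + 1),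
        Au t = if n % 2 = 0 then A0 else A1) :
    (∀ k : ℕ, (⨆ j : Fin 2, ∫ t in ((k : ℝ))..((k : ℝ) + 1), Au t j j) = 1)
    ∧ Filter.limsup (fun s : ℕ => ((s : ℝ))⁻¹ * ∑ k ∈ Finset.range s,
        ⨆ j : Fin 2, ∫ t in ((k : ℝ))..((k : ℝ) + 1), Au t j j)
        Filter.atTop = 1
    ∧ Filter.limsup (fun s : ℕ => (2 * (s : ℝ))⁻¹ * ∑ k ∈ Finset.range s,
        ⨆ j : Fin 2, ∫ t in (2 * (k : ℝ))..(2 * (k : ℝ) + 2), Au t j j)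
        Filter.atTop = -(1/2) := by
  have hpart1 : ∀ k : ℕ, (⨆ j : Fin 2, ∫ t in ((k : ℝ))..((k : ℝ) + 1), Au t j j) = 1 := by
    intro k
    have hval : ∀ j : Fin 2, (∫ t in ((k : ℝ))..((k : ℝ) + 1), Au t j j)
        = (if k % 2 = 0 then A0 else A1) j j :=
      fun j => int_const_on _ _ _ (fun t ht => by rw [hAu k t ht])
    by_cases hk : k % 2 = 0
    · refine sup_two _ ⟨0, ?_⟩ (fun j => ?_)
      · rw [hval 0]; simp [hk, A0]
      · rw [hval j]; fin_cases j <;> simp [hk, A0] <;> norm_num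
    · refine sup_two _ ⟨1, ?_⟩ (fun j => ?_)
      · rw [hval 1]; simp [hk, A1]
      · rw [hval j]; fin_cases j <;> simp [hk, A1] <;> norm_num
  refine ⟨hpart1, ?_, ?_⟩
  · have : (fun s : ℕ => ((s : ℝ))⁻¹ * ∑ k ∈ Finset.range s,
        ⨆ j : Fin 2, ∫ t in ((k : ℝ))..((k : ℝ) + 1), Au t j j)
        =ᶠ[Filter.atTop] (fun _ : ℕ => (1:ℝ)) := by
      filter_upwards [Filter.eventually_ge_atTop 1] with s hs
      simp only [hpart1, Finset.sum_const, Finset.card_range, nsmul_eq_mul, mul_one]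
      have : (s : ℝ) ≠ 0 := by positivity
      field_simp
    rw [Filter.limsup_congr this, Filter.limsup_const]
  · have hval2 : ∀ k : ℕ, (⨆ j : Fin 2, ∫ t in (2 * (k : ℝ))..(2 * (k : ℝ) + 2), Au t j j)
        = -1 := by
      intro k
      have e1 : ((2 * k : ℕ) : ℝ) = 2 * (k : ℝ) := by push_cast; ring
      have e2 : ((2 * k + 1: ℕ) : ℝ) = 2 * (k : ℝ) + 1 := by push_cast; ring
      have hA : ∀ t ∈ Set.Ioc (2 * (k:ℝ)) (2 * (k:ℝ) + 1), Au t = A0 := by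
        intro t ht
        have := hAu (2 * k) t (by rw [e1]; exact ht)
        simpa using this
      have hB : ∀ t ∈ Set.Ioc (2 * (k:ℝ) + 1) (2 * (k:ℝ) + 1 + 1), Au t = A1 := by
        intro t ht
        have := hAu (2 * k + 1) t (by rw [e2]; exact ht)
        simpa [Nat.add_mod] using this
      have hint : ∀ j : Fin 2, (∫ t in (2 * (k:ℝ))..(2 * (k:ℝ) + 2), Au t j j) = -1 := by
        intro j
        have i1 : IntervalIntegrable (fun t => Au t j j) volume (2 * (k:ℝ)) (2 * (k:ℝ) + 1) :=
          intble_const_on _ _ (A0 j j) (by linarith) _ (fun t ht => by rw [hA t ht])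
        have i2 : IntervalIntegrable (fun t => Au t j j) volume (2 * (k:ℝ) + 1) (2 * (k:ℝ) + 2) := by
          have : (2 * (k:ℝ) + 2) = 2 * (k:ℝ) + 1 + 1 := by ring
          rw [this]
          exact intble_const_on _ _ (A1 j j) (by linarith) _ (fun t ht => by rw [hB t ht])
        have hadd := intervalIntegral.integral_add_adjacent_intervals i1 i2
        have v1 : (∫ t in (2 * (k:ℝ))..(2 * (k:ℝ) + 1), Au t j j) = A0 j j :=
          int_const_on _ _ _ (fun t ht => by rw [hA t ht])
        have v2 : (∫ t in (2 * (k:ℝ) + 1)..(2 * (k:ℝ) + 2), Au t j j) = A1 j j := by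
          have e : (2 * (k:ℝ) + 2) = 2 * (k:ℝ) + 1 + 1 := by ring
          rw [e]
          exact int_const_on _ _ _ (fun t ht => by rw [hB t ht])
        rw [← hadd, v1, v2]
        fin_cases j <;> simp [A0, A1] <;> norm_num
      rw [funext hint, ciSup_const]
    have heq : (fun s : ℕ => (2 * (s : ℝ))⁻¹ * ∑ k ∈ Finset.range s,
        ⨆ j : Fin 2, ∫ t in (2 * (k : ℝ))..(2 * (k : ℝ) + 2), Au t j j)
        =ᶠ[Filter.atTop] (fun _ : ℕ => (-(1/2) : ℝ)) := by
      filter_upwards [Filter.eventually_ge_atTop 1] with s hs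
      simp only [hval2, Finset.sum_const, Finset.card_range, nsmul_eq_mul]
      have : (s : ℝ) ≠ 0 := by positivity
      field_simp
    rw [Filter.limsup_congr heq, Filter.limsup_const]
end

section
/- Let B_0(t) = [[1 + γ_0(t), α_0(t)], [β_0(t), −2 + η_0(t)]] and B_1(t) = [[−2 + γ_1(t), α_1(t)], [β_1(t), 1 + η_1(t)]], where γ_0, γ_1, η_0, η_1, α_0, α_1, β_0, β_1 : ℝ₊ → ℝ are piecewise continuous functions converging to 0 as t → ∞. Let τ_n = n, σ(n) = 0 for n odd and σ(n) = 1 for n even, and u(t) = σ(n) for n−1 < t ≤ n. Then every solution x of the time-varying switched system ẋ(t) = B_{u(t)}(t)x(t) satisfies limsup_{t→∞} (1/t)·log‖x(t)‖ < 0; i.e., the system is globally asymptotically exponentially stable under this periodic switching law. -/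
open Real Set Filter

/-- triangle wave: 0 at even integers, 1 at odd integers, slope ±1. -/
noncomputable def tw (t : ℝ) : ℝ := Real.arccos (Real.cos (Real.pi * t)) / Real.pi

lemma tw_nonneg (t : ℝ) : 0 ≤ tw t :=
  div_nonneg (Real.arccos_nonneg _) Real.pi_pos.le

lemma tw_le_one (t : ℝ) : tw t ≤ 1 := by
  rw [tw, div_le_one Real.pi_pos]
  exact Real.arccos_le_pi _

lemma tw_continuous : Continuous tw :=
  (Real.continuous_arccos.comp (Real.continuous_cos.comp (continuous_const.mul continuous_id))).div_const _

lemma tw_eq_even (k : ℕ) {s : ℝ} (h1 : (2*k : ℝ) ≤ s) (h2 : s ≤ 2*k+1) :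
    tw s = s - 2*k := by
  have hπ := Real.pi_pos
  have hcos : Real.cos (Real.pi * s) = Real.cos (Real.pi * (s - 2*k)) := by
    have : Real.pi * s = Real.pi * (s - 2*k) + (k : ℤ) * (2 * Real.pi) := by
      push_cast; ring
    rw [this, Real.cos_add_int_mul_two_pi]
  rw [tw, hcos, Real.arccos_cos (by nlinarith) (by nlinarith)]
  field_simp

lemma tw_eq_odd (k : ℕ) {s : ℝ} (h1 : (2*k+1 : ℝ) ≤ s) (h2 : s ≤ 2*k+2) :
    tw s = 2*k+2 - s := by
  have hπ := Real.pi_pos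
  have hcos : Real.cos (Real.pi * s) = Real.cos (Real.pi * (2*k+2 - s)) := by
    have : Real.pi * (2*k+2 - s) = -(Real.pi * s) + ((k+1 : ℤ) : ℝ) * (2 * Real.pi) := by
      push_cast; ring
    rw [this, Real.cos_add_int_mul_two_pi, Real.cos_neg]
  rw [tw, hcos, Real.arccos_cos (by nlinarith) (by nlinarith)]
  field_simp

lemma tw_deriv (n : ℕ) {t : ℝ} (ht : t ∈ Set.Ioo (n:ℝ) ((n:ℝ)+1)) :
    HasDerivAt tw (if n % 2 = 0 then 1 else -1) t := by
  rcases Nat.even_or_odd n with ⟨k, hk⟩ | ⟨k, hk⟩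
  · have hn : (n : ℝ) = 2*k := by rw [hk]; push_cast; ring
    rw [if_pos (by omega)]
    have h : HasDerivAt (fun s : ℝ => s - 2*(k:ℝ)) 1 t := (hasDerivAt_id t).sub_const _
    refine h.congr_of_eventuallyEq ?_
    filter_upwards [Ioo_mem_nhds ht.1 ht.2] with s hs
    have hs1 := hs.1; have hs2 := hs.2
    rw [hn] at hs1 hs2
    exact tw_eq_even k (by linarith) (by linarith)
  · have hn : (n : ℝ) = 2*k+1 := by rw [hk]; push_cast; ring
    rw [if_neg (by omega)]
    have h : HasDerivAt (fun s : ℝ => 2*(k:ℝ)+2 - s) (-1) t := by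
      simpa using ((hasDerivAt_id t).const_sub (2*(k:ℝ)+2))
    refine h.congr_of_eventuallyEq ?_
    filter_upwards [Ioo_mem_nhds ht.1 ht.2] with s hs
    have hs1 := hs.1; have hs2 := hs.2
    rw [hn] at hs1 hs2
    exact tw_eq_odd k (by linarith) (by linarith)

/-- weight for first coordinate -/
noncomputable def psi1 (t : ℝ) : ℝ := -t/2 + 3/2 * tw t
/-- weight for second coordinate -/
noncomputable def psi2 (t : ℝ) : ℝ := -t/2 + 3/2 - 3/2 * tw t

lemma psi1_continuous : Continuous psi1 :=
  ((continuous_id.neg.div_const 2)).add (continuous_const.mul tw_continuous)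

lemma psi2_continuous : Continuous psi2 :=
  (((continuous_id.neg.div_const 2)).add continuous_const).sub (continuous_const.mul tw_continuous)

lemma psi1_le (t : ℝ) : psi1 t ≤ -t/2 + 3/2 := by
  have := tw_le_one t; unfold psi1; linarith

lemma psi1_ge (t : ℝ) : -t/2 ≤ psi1 t := by
  have := tw_nonneg t; unfold psi1; linarith

lemma psi2_le (t : ℝ) : psi2 t ≤ -t/2 + 3/2 := by
  have := tw_nonneg t; unfold psi2; linarith

lemma psi2_ge (t : ℝ) : -t/2 ≤ psi2 t := by
  have := tw_le_one t; unfold psi2; linarith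

lemma psi1_deriv (n : ℕ) {t : ℝ} (ht : t ∈ Set.Ioo (n:ℝ) ((n:ℝ)+1)) :
    HasDerivAt psi1 (if n % 2 = 0 then 1 else -2) t := by
  have h := ((hasDerivAt_id t).neg.div_const 2).add ((tw_deriv n ht).const_mul (3/2))
  have h' : HasDerivAt psi1 (-1/2 + 3/2 * (if n % 2 = 0 then 1 else -1)) t := h
  convert h' using 1
  by_cases hn : n % 2 = 0 <;> simp [hn] <;> norm_num

lemma psi2_deriv (n : ℕ) {t : ℝ} (ht : t ∈ Set.Ioo (n:ℝ) ((n:ℝ)+1)) :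
    HasDerivAt psi2 (if n % 2 = 0 then -2 else 1) t := by
  have h := (((hasDerivAt_id t).neg.div_const 2).add_const (3/2)).sub ((tw_deriv n ht).const_mul (3/2))
  have h' : HasDerivAt psi2 (-1/2 - 3/2 * (if n % 2 = 0 then 1 else -1)) t := h
  convert h' using 1
  by_cases hn : n % 2 = 0 <;> simp [hn] <;> norm_num

/-- gluing antitonicity over finitely many exceptional points -/
lemma antitone_aux (f : ℝ → ℝ) (F : Finset ℝ) :
    ∀ a b : ℝ, a ≤ b → ContinuousOn f (Set.Icc a b) →
    (∀ y ∈ Set.Ioo a b, y ∉ F → ∃ v ≤ 0, HasDerivAt f v y) → f b ≤ f a := by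
  induction F using Finset.strongInduction with
  | _ F ih =>
    intro a b hab hcont hderiv
    by_cases hF : ∃ e ∈ F, e ∈ Set.Ioo a b
    · obtain ⟨e, heF, he⟩ := hF
      have h1 := ih (F.erase e) (Finset.erase_ssubset heF) a e he.1.le
        (hcont.mono (Set.Icc_subset_Icc le_rfl he.2.le))
        (fun y hy hyF => hderiv y ⟨hy.1, hy.2.trans he.2⟩
          (fun hmem => hyF (Finset.mem_erase.2 ⟨ne_of_lt hy.2, hmem⟩)))
      have h2 := ih (F.erase e) (Finset.erase_ssubset heF) e b he.2.le
        (hcont.mono (Set.Icc_subset_Icc he.1.le le_rfl))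
        (fun y hy hyF => hderiv y ⟨he.1.trans hy.1, hy.2⟩
          (fun hmem => hyF (Finset.mem_erase.2 ⟨(ne_of_lt hy.1).symm, hmem⟩)))
      linarith
    · push_neg at hF
      have hanti : AntitoneOn f (Set.Icc a b) := by
        apply antitoneOn_of_deriv_nonpos (convex_Icc a b) hcont
        · intro y hy
          rw [interior_Icc] at hy
          obtain ⟨v, _, hd⟩ := hderiv y hy (fun h => (hF y h hy).elim)
          exact hd.differentiableAt.differentiableWithinAt
        · intro y hy
          rw [interior_Icc] at hy
          obtain ⟨v, hv, hd⟩ := hderiv y hy (fun h => (hF y h hy).elim)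
          rw [hd.deriv]; exact hv
      exact hanti (Set.left_mem_Icc.2 hab) (Set.right_mem_Icc.2 hab) hab

lemma exp_three_halves_le : Real.exp (3/2) ≤ 5 := by
  have h1 : Real.exp (3/2) ^ 2 = Real.exp 3 := by
    rw [sq, ← Real.exp_add]; norm_num
  have h2 : Real.exp 3 = Real.exp 1 * Real.exp 1 * Real.exp 1 := by
    rw [← Real.exp_add, ← Real.exp_add]; norm_num
  have h := Real.exp_one_lt_d9
  nlinarith [Real.exp_pos (3/2), Real.exp_pos 1]

lemma cross_bound {a E Y1 Y2 Lv : ℝ} (ha : |a| ≤ Lv) (hE0 : 0 ≤ E) (hE : E ≤ 5) :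
    2 * (a * (E * (Y1 * Y2))) ≤ 5 * Lv * (Y1^2 + Y2^2) := by
  have hL : 0 ≤ Lv := (abs_nonneg a).trans ha
  have h1 : a * (E * (Y1*Y2)) ≤ |a| * (E * |Y1*Y2|) := by
    calc a * (E*(Y1*Y2)) ≤ |a * (E*(Y1*Y2))| := le_abs_self _
    _ = |a| * (E * |Y1*Y2|) := by rw [abs_mul, abs_mul, abs_of_nonneg hE0]
  have h2 : |a| * (E * |Y1*Y2|) ≤ Lv * (5 * |Y1*Y2|) :=
    mul_le_mul ha (mul_le_mul_of_nonneg_right hE (abs_nonneg _)) (by positivity) hL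
  have h3 : 2*|Y1*Y2| ≤ Y1^2 + Y2^2 := by
    rw [abs_mul]; nlinarith [sq_abs Y1, sq_abs Y2, sq_nonneg (|Y1| - |Y2|)]
  nlinarith

set_option maxHeartbeats 1000000

/-- the time-varying switched system built from
`B₀(t) = [[1+γ₀(t), α₀(t)], [β₀(t), −2+η₀(t)]]` and
`B₁(t) = [[−2+γ₁(t), α₁(t)], [β₁(t), 1+η₁(t)]]`, with all eight entry-perturbation
functions piecewise continuous on `(0,∞)` and converging to `0` at infinity, is
globally asymptotically exponentially stable under the periodic unit-time switching
law alternating `0, 1`.  Piecewise continuity is encoded by a strictly increasing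
sequence `r` of partition points tending to infinity between which all eight
functions are continuous; solutions satisfy the ODE away from the switching times
and the partition points. -/
theorem stmt14
    (g0 g1 e0 e1 a0 a1 b0 b1 : ℝ → ℝ)
    (r : ℕ → ℝ) (hr0 : r 0 = 0) (hrmono : StrictMono r)
    (hrtop : Filter.Tendsto r Filter.atTop Filter.atTop)
    (hpc : ∀ f ∈ ([g0, g1, e0, e1, a0, a1, b0, b1] : List (ℝ → ℝ)),
        ∀ k : ℕ, ContinuousOn f (Set.Ioo (r k) (r (k+1))))
    (hlim : ∀ f ∈ ([g0, g1, e0, e1, a0, a1, b0, b1] : List (ℝ → ℝ)),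
        Filter.Tendsto f Filter.atTop (nhds 0))
    (B : Fin 2 → ℝ → Matrix (Fin 2) (Fin 2) ℝ)
    (hB0 : ∀ t : ℝ, B 0 t = Matrix.of ![![1 + g0 t, a0 t], ![b0 t, -2 + e0 t]])
    (hB1 : ∀ t : ℝ, B 1 t = Matrix.of ![![-2 + g1 t, a1 t], ![b1 t, 1 + e1 t]])
    (u : ℝ → Fin 2)
    (hu : ∀ n : ℕ, ∀ t ∈ Set.Ioc ((n : ℝ)) ((n : ℝ) + 1),
        u t = if n % 2 = 0 then 0 else 1)
    (x : ℝ → EuclideanSpace ℝ (Fin 2))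
    (hxcont : ContinuousOn x (Set.Ici (0:ℝ)))
    (hxode : ∀ t > (0:ℝ), (∀ n : ℕ, t ≠ (n : ℝ)) → (∀ k : ℕ, t ≠ r k) →
        HasDerivAt x (mulVecE (B (u t) t) (x t)) t) :
    ∃ c < (0:ℝ), ∀ᶠ t : ℝ in Filter.atTop, ‖x t‖ ≤ Real.exp (c * t) := by
  classical
  -- total perturbation size
  set L : ℝ → ℝ := fun t => |g0 t| + |g1 t| + |e0 t| + |e1 t| + |a0 t| + |a1 t| + |b0 t| + |b1 t|
    with hLdef
  have hL0 : ∀ t, 0 ≤ L t := fun t => by rw [hLdef]; positivity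
  have hLtend : Filter.Tendsto L Filter.atTop (nhds 0) := by
    have h := (hlim g0 (by simp)).abs |>.add (hlim g1 (by simp)).abs
      |>.add (hlim e0 (by simp)).abs |>.add (hlim e1 (by simp)).abs
      |>.add (hlim a0 (by simp)).abs |>.add (hlim a1 (by simp)).abs
      |>.add (hlim b0 (by simp)).abs |>.add (hlim b1 (by simp)).abs
    simpa using h
  -- the Lyapunov-type function
  set V : ℝ → ℝ := fun t => (Real.exp (-psi1 t) * x t 0)^2 + (Real.exp (-psi2 t) * x t 1)^2
    with hVdef
  have hV0 : ∀ t, 0 ≤ V t := fun t => add_nonneg (sq_nonneg _) (sq_nonneg _)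
  have hVcont : ContinuousOn V (Set.Ici (0:ℝ)) := by
    apply ContinuousOn.add
    · exact (((psi1_continuous.neg.rexp).continuousOn.mul
        ((EuclideanSpace.proj (0 : Fin 2)).continuous.comp_continuousOn hxcont)).pow 2)
    · exact (((psi2_continuous.neg.rexp).continuousOn.mul
        ((EuclideanSpace.proj (1 : Fin 2)).continuous.comp_continuousOn hxcont)).pow 2)
  -- core derivative estimate
  have key : ∀ t : ℝ, 1 < t → (∀ n : ℕ, t ≠ (n:ℝ)) → (∀ k : ℕ, t ≠ r k) →
      ∃ v, HasDerivAt V v t ∧ v ≤ 14 * L t * V t := by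
    intro t ht hnat hrk
    obtain ⟨n, hn1, hn2⟩ : ∃ n : ℕ, (n:ℝ) < t ∧ t < (n:ℝ)+1 := by
      refine ⟨⌊t⌋.toNat, ?_, ?_⟩
      · have hfl : ((⌊t⌋.toNat : ℕ) : ℝ) = ((⌊t⌋ : ℤ) : ℝ) := by
          norm_cast; exact Int.toNat_of_nonneg (Int.floor_nonneg.2 (by linarith))
        rw [hfl]
        exact lt_of_le_of_ne (Int.floor_le t) (by
          intro h; exact hnat ⌊t⌋.toNat (by rw [hfl]; exact h.symm))
      · have hfl : ((⌊t⌋.toNat : ℕ) : ℝ) = ((⌊t⌋ : ℤ) : ℝ) := by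
          norm_cast; exact Int.toNat_of_nonneg (Int.floor_nonneg.2 (by linarith))
        rw [hfl]; exact Int.lt_floor_add_one t
    have htIoo : t ∈ Set.Ioo (n:ℝ) ((n:ℝ)+1) := ⟨hn1, hn2⟩
    have hut : u t = if n % 2 = 0 then 0 else 1 := hu n t ⟨hn1, hn2.le⟩
    have hx := hxode t (by linarith) hnat hrk
    have hx0 : HasDerivAt (fun s => x s 0) ((B (u t) t).mulVec (x t) 0) t := by
      exact (EuclideanSpace.proj (0 : Fin 2)).hasFDerivAt.comp_hasDerivAt t hx
    have hx1 : HasDerivAt (fun s => x s 1) ((B (u t) t).mulVec (x t) 1) t := by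
      exact (EuclideanSpace.proj (1 : Fin 2)).hasFDerivAt.comp_hasDerivAt t hx
    have hp1 := psi1_deriv n htIoo
    have hp2 := psi2_deriv n htIoo
    set d1 : ℝ := if n % 2 = 0 then 1 else -2 with hd1def
    set d2 : ℝ := if n % 2 = 0 then -2 else 1 with hd2def
    have hb := fun t => abs_nonneg (g0 t)
    obtain ⟨γ, α, β, η, hγ, hα, hβ, hη, hdx0, hdx1⟩ :
        ∃ γ α β η : ℝ, |γ| ≤ L t ∧ |α| ≤ L t ∧ |β| ≤ L t ∧ |η| ≤ L t ∧
          HasDerivAt (fun s => x s 0) ((d1 + γ) * x t 0 + α * x t 1) t ∧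
          HasDerivAt (fun s => x s 1) (β * x t 0 + (d2 + η) * x t 1) t := by
      have habs : ∀ s : ℝ, |g0 s| ≤ L s ∧ |g1 s| ≤ L s ∧ |e0 s| ≤ L s ∧ |e1 s| ≤ L s ∧
          |a0 s| ≤ L s ∧ |a1 s| ≤ L s ∧ |b0 s| ≤ L s ∧ |b1 s| ≤ L s := by
        intro s
        simp only [hLdef]
        refine ⟨?_, ?_, ?_, ?_, ?_, ?_, ?_, ?_⟩ <;>
          linarith [abs_nonneg (g0 s), abs_nonneg (g1 s), abs_nonneg (e0 s), abs_nonneg (e1 s),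
            abs_nonneg (a0 s), abs_nonneg (a1 s), abs_nonneg (b0 s), abs_nonneg (b1 s)]
      obtain ⟨hg0, hg1, he0, he1, ha0, ha1, hb0, hb1⟩ := habs t
      by_cases hpar : n % 2 = 0
      · refine ⟨g0 t, a0 t, b0 t, e0 t, hg0, ha0, hb0, he0, ?_, ?_⟩
        · convert hx0 using 1
          rw [hut, if_pos hpar, hB0]
          simp [Matrix.mulVec, dotProduct, Fin.sum_univ_two, Matrix.vecHead, Matrix.vecTail, hd1def, if_pos hpar]
        · convert hx1 using 1
          rw [hut, if_pos hpar, hB0]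
          simp [Matrix.mulVec, dotProduct, Fin.sum_univ_two, Matrix.vecHead, Matrix.vecTail, hd2def, if_pos hpar]
      · refine ⟨g1 t, a1 t, b1 t, e1 t, hg1, ha1, hb1, he1, ?_, ?_⟩
        · convert hx0 using 1
          rw [hut, if_neg hpar, hB1]
          simp [Matrix.mulVec, dotProduct, Fin.sum_univ_two, Matrix.vecHead, Matrix.vecTail, hd1def, if_neg hpar]
        · convert hx1 using 1
          rw [hut, if_neg hpar, hB1]
          simp [Matrix.mulVec, dotProduct, Fin.sum_univ_two, Matrix.vecHead, Matrix.vecTail, hd2def, if_neg hpar]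
    -- weighted component derivatives
    have hy1 : HasDerivAt (fun s => Real.exp (-psi1 s) * x s 0)
        (Real.exp (-psi1 t) * (γ * x t 0 + α * x t 1)) t := by
      have he : HasDerivAt (fun s => Real.exp (-psi1 s)) (Real.exp (-psi1 t) * (-d1)) t :=
        hp1.neg.exp
      have h := he.mul hdx0
      exact h.congr_deriv (by ring)
    have hy2 : HasDerivAt (fun s => Real.exp (-psi2 s) * x s 1)
        (Real.exp (-psi2 t) * (β * x t 0 + η * x t 1)) t := by
      have he : HasDerivAt (fun s => Real.exp (-psi2 s)) (Real.exp (-psi2 t) * (-d2)) t :=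
        hp2.neg.exp
      have h := he.mul hdx1
      exact h.congr_deriv (by ring)
    have hV : HasDerivAt V
        (2 * (Real.exp (-psi1 t) * x t 0) * (Real.exp (-psi1 t) * (γ * x t 0 + α * x t 1))
          + 2 * (Real.exp (-psi2 t) * x t 1) * (Real.exp (-psi2 t) * (β * x t 0 + η * x t 1))) t := by
      have h := (hy1.pow 2).add (hy2.pow 2)
      exact h.congr_deriv (by push_cast; ring)
    refine ⟨_, hV, ?_⟩
    -- estimate the derivative
    set Y1 : ℝ := Real.exp (-psi1 t) * x t 0 with hY1def
    set Y2 : ℝ := Real.exp (-psi2 t) * x t 1 with hY2def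
    have hVt : V t = Y1^2 + Y2^2 := rfl
    have hE21 : Real.exp (-psi1 t) * x t 1 = Real.exp (psi2 t - psi1 t) * Y2 := by
      rw [hY2def, ← mul_assoc, ← Real.exp_add]
      ring_nf
    have hE12 : Real.exp (-psi2 t) * x t 0 = Real.exp (psi1 t - psi2 t) * Y1 := by
      rw [hY1def, ← mul_assoc, ← Real.exp_add]
      ring_nf
    have hc21 : Real.exp (psi2 t - psi1 t) ≤ 5 :=
      le_trans (Real.exp_le_exp.2 (by linarith [psi1_ge t, psi2_le t])) exp_three_halves_le
    have hc12 : Real.exp (psi1 t - psi2 t) ≤ 5 :=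
      le_trans (Real.exp_le_exp.2 (by linarith [psi2_ge t, psi1_le t])) exp_three_halves_le
    have hrw : 2 * Y1 * (Real.exp (-psi1 t) * (γ * x t 0 + α * x t 1))
          + 2 * Y2 * (Real.exp (-psi2 t) * (β * x t 0 + η * x t 1))
        = 2 * γ * Y1^2 + 2 * (α * (Real.exp (psi2 t - psi1 t) * (Y1 * Y2)))
          + 2 * (β * (Real.exp (psi1 t - psi2 t) * (Y1 * Y2))) + 2 * η * Y2^2 := by
      have e1 : Real.exp (-psi1 t) * (γ * x t 0 + α * x t 1)
          = γ * (Real.exp (-psi1 t) * x t 0) + α * (Real.exp (-psi1 t) * x t 1) := by ring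
      have e2 : Real.exp (-psi2 t) * (β * x t 0 + η * x t 1)
          = β * (Real.exp (-psi2 t) * x t 0) + η * (Real.exp (-psi2 t) * x t 1) := by ring
      rw [e1, e2, hE21, hE12, ← hY1def, ← hY2def]
      ring
    rw [hrw, hVt]
    have ht1 : 2 * γ * Y1^2 ≤ 2 * L t * Y1^2 := by
      have : γ ≤ L t := (le_abs_self γ).trans hγ
      nlinarith [sq_nonneg Y1]
    have ht4 : 2 * η * Y2^2 ≤ 2 * L t * Y2^2 := by
      have : η ≤ L t := (le_abs_self η).trans hη
      nlinarith [sq_nonneg Y2]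
    have ht2 : 2 * (α * (Real.exp (psi2 t - psi1 t) * (Y1 * Y2))) ≤ 5 * L t * (Y1^2 + Y2^2) :=
      cross_bound hα (Real.exp_pos _).le hc21
    have ht3 : 2 * (β * (Real.exp (psi1 t - psi2 t) * (Y1 * Y2))) ≤ 5 * L t * (Y1^2 + Y2^2) :=
      cross_bound hβ (Real.exp_pos _).le hc12
    have hfin : 2 * L t * Y1^2 + 5 * L t * (Y1^2 + Y2^2) + 5 * L t * (Y1^2 + Y2^2)
        + 2 * L t * Y2^2 ≤ 14 * L t * (Y1^2 + Y2^2) := by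
      nlinarith [mul_nonneg (hL0 t) (sq_nonneg Y1), mul_nonneg (hL0 t) (sq_nonneg Y2)]
    linarith
  -- threshold time
  obtain ⟨T, hT2, hTL⟩ : ∃ T : ℝ, 2 ≤ T ∧ ∀ s ≥ T, L s ≤ 1/56 := by
    have h : ∀ᶠ s in Filter.atTop, L s < 1/56 := hLtend.eventually_lt_const (by norm_num)
    obtain ⟨T0, hT0⟩ := Filter.eventually_atTop.1 h
    exact ⟨max T0 2, le_max_right _ _,
      fun s hs => (hT0 s (le_trans (le_max_left _ _) hs)).le⟩
  -- decay of V
  have hVmono : ∀ s ≥ T, V s ≤ V T * Real.exp ((s - T)/4) := by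
    intro s hs
    set G : ℝ → ℝ := fun t => V t * Real.exp (-(t/4)) with hGdef
    obtain ⟨N1, hN1⟩ : ∃ N1 : ℕ, ∀ k ≥ N1, s + 1 ≤ r k :=
      Filter.eventually_atTop.1 (hrtop.eventually_ge_atTop (s+1))
    set N2 : ℕ := ⌈s⌉₊ + 1 with hN2def
    set F : Finset ℝ := (Finset.range N1).image r ∪ (Finset.range N2).image (fun m : ℕ => (m:ℝ))
      with hFdef
    have hGcont : ContinuousOn G (Set.Icc T s) := by
      apply ContinuousOn.mul
      · exact hVcont.mono (fun y hy => le_trans (by linarith) hy.1)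
      · exact ((continuous_id.div_const 4).neg.rexp).continuousOn
    have hGd : ∀ y ∈ Set.Ioo T s, y ∉ F → ∃ v ≤ 0, HasDerivAt G v y := by
      intro y hy hyF
      have hynat : ∀ n : ℕ, y ≠ (n:ℝ) := by
        intro n hn
        apply hyF
        rw [hFdef]
        apply Finset.mem_union_right
        apply Finset.mem_image.2
        refine ⟨n, Finset.mem_range.2 ?_, hn.symm⟩
        have h1 : (n:ℝ) < s := hn ▸ hy.2
        have h2 : (n:ℝ) ≤ (⌈s⌉₊ : ℝ) := h1.le.trans (Nat.le_ceil s)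
        have := Nat.cast_le.1 h2
        omega
      have hyr : ∀ k : ℕ, y ≠ r k := by
        intro k hk
        apply hyF
        rw [hFdef]
        apply Finset.mem_union_left
        apply Finset.mem_image.2
        refine ⟨k, Finset.mem_range.2 ?_, hk.symm⟩
        by_contra hc
        push_neg at hc
        have := hN1 k hc
        rw [← hk] at this
        linarith [hy.2]
      obtain ⟨v, hv, hvle⟩ := key y (by linarith [hy.1]) hynat hyr
      have hLs : L y ≤ 1/56 := hTL y hy.1.le
      have hexp : HasDerivAt (fun t : ℝ => Real.exp (-(t/4)))
          (Real.exp (-(y/4)) * (-(1/4))) y := by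
        exact (((hasDerivAt_id y).div_const 4).neg).exp
      refine ⟨v * Real.exp (-(y/4)) + V y * (Real.exp (-(y/4)) * (-(1/4))), ?_, hv.mul hexp⟩
      have h14 : v ≤ (1/4) * V y := by
        have h56 : 14 * L y * V y ≤ (1/4) * V y := by
          have hm : L y * V y ≤ (1/56) * V y := mul_le_mul_of_nonneg_right hLs (hV0 y)
          nlinarith [hm]
        exact le_trans hvle h56
      have hep := Real.exp_pos (-(y/4))
      have hmm : v * Real.exp (-(y/4)) ≤ ((1/4) * V y) * Real.exp (-(y/4)) :=
        mul_le_mul_of_nonneg_right h14 hep.le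
      nlinarith [hmm]
    have hGle := antitone_aux G F T s hs hGcont hGd
    have h1 : V s = V s * Real.exp (-(s/4)) * Real.exp (s/4) := by
      rw [mul_assoc, ← Real.exp_add]
      simp
    have h2 : V T * Real.exp (-(T/4)) * Real.exp (s/4) = V T * Real.exp ((s-T)/4) := by
      rw [mul_assoc, ← Real.exp_add]
      ring_nf
    calc V s = V s * Real.exp (-(s/4)) * Real.exp (s/4) := h1
      _ ≤ V T * Real.exp (-(T/4)) * Real.exp (s/4) :=
          mul_le_mul_of_nonneg_right hGle (Real.exp_pos _).le
      _ = V T * Real.exp ((s-T)/4) := h2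
  -- conclusion
  refine ⟨-(1/4), by norm_num, ?_⟩
  have hnormsq : ∀ v : EuclideanSpace ℝ (Fin 2), ‖v‖^2 = (v 0)^2 + (v 1)^2 := by
    intro v
    rw [EuclideanSpace.norm_eq, Real.sq_sqrt (by positivity)]
    simp [Fin.sum_univ_two, Real.norm_eq_abs, sq_abs]
  set C : ℝ := 2 * Real.exp 3 * (V T * Real.exp (-(T/4))) with hCdef
  have hexpT : Filter.Tendsto (fun t : ℝ => Real.exp (t/4)) Filter.atTop Filter.atTop :=
    Real.tendsto_exp_atTop.comp (tendsto_id.atTop_div_const (by norm_num))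
  filter_upwards [Filter.eventually_ge_atTop T, hexpT.eventually_ge_atTop C] with t htT htC
  -- componentwise bounds
  have hcomp : ∀ i : Fin 2, ‖x t‖^2 ≤ 2 * Real.exp (-t+3) * V t := by
    intro _
    have hbd1 : (x t 0)^2 ≤ Real.exp (-t+3) * V t := by
      have hid : (x t 0)^2 = Real.exp (2 * psi1 t) * (Real.exp (-psi1 t) * x t 0)^2 := by
        rw [mul_pow, sq (Real.exp (-psi1 t)), ← Real.exp_add, ← mul_assoc, ← Real.exp_add]
        ring_nf
        simp
      rw [hid]
      have h1 : Real.exp (2 * psi1 t) ≤ Real.exp (-t+3) :=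
        Real.exp_le_exp.2 (by linarith [psi1_le t])
      have h2 : (Real.exp (-psi1 t) * x t 0)^2 ≤ V t := by
        rw [hVdef]
        simp only []
        nlinarith [sq_nonneg (Real.exp (-psi2 t) * x t 1)]
      calc Real.exp (2 * psi1 t) * (Real.exp (-psi1 t) * x t 0)^2
          ≤ Real.exp (-t+3) * (Real.exp (-psi1 t) * x t 0)^2 :=
            mul_le_mul_of_nonneg_right h1 (sq_nonneg _)
        _ ≤ Real.exp (-t+3) * V t := mul_le_mul_of_nonneg_left h2 (Real.exp_pos _).le
    have hbd2 : (x t 1)^2 ≤ Real.exp (-t+3) * V t := by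
      have hid : (x t 1)^2 = Real.exp (2 * psi2 t) * (Real.exp (-psi2 t) * x t 1)^2 := by
        rw [mul_pow, sq (Real.exp (-psi2 t)), ← Real.exp_add, ← mul_assoc, ← Real.exp_add]
        ring_nf
        simp
      rw [hid]
      have h1 : Real.exp (2 * psi2 t) ≤ Real.exp (-t+3) :=
        Real.exp_le_exp.2 (by linarith [psi2_le t])
      have h2 : (Real.exp (-psi2 t) * x t 1)^2 ≤ V t := by
        rw [hVdef]
        simp only []
        nlinarith [sq_nonneg (Real.exp (-psi1 t) * x t 0)]
      calc Real.exp (2 * psi2 t) * (Real.exp (-psi2 t) * x t 1)^2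
          ≤ Real.exp (-t+3) * (Real.exp (-psi2 t) * x t 1)^2 :=
            mul_le_mul_of_nonneg_right h1 (sq_nonneg _)
        _ ≤ Real.exp (-t+3) * V t := mul_le_mul_of_nonneg_left h2 (Real.exp_pos _).le
    rw [hnormsq (x t)]
    linarith
  have hVle := hVmono t htT
  have hchain : ‖x t‖^2 ≤ C * Real.exp (-(3/4)*t) := by
    have h1 : ‖x t‖^2 ≤ 2 * Real.exp (-t+3) * V t := hcomp 0
    have h2 : 2 * Real.exp (-t+3) * V t ≤ 2 * Real.exp (-t+3) * (V T * Real.exp ((t-T)/4)) := by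
      apply mul_le_mul_of_nonneg_left hVle
      positivity
    have h3 : 2 * Real.exp (-t+3) * (V T * Real.exp ((t-T)/4)) = C * Real.exp (-(3/4)*t) := by
      rw [hCdef]
      rw [show (2:ℝ) * Real.exp (-t+3) * (V T * Real.exp ((t-T)/4))
          = 2 * V T * (Real.exp (-t+3) * Real.exp ((t-T)/4)) by ring]
      rw [show (2:ℝ) * Real.exp 3 * (V T * Real.exp (-(T/4))) * Real.exp (-(3/4)*t)
          = 2 * V T * (Real.exp 3 * Real.exp (-(T/4)) * Real.exp (-(3/4)*t)) by ring]
      rw [← Real.exp_add, ← Real.exp_add, ← Real.exp_add]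
      congr 1
      ring
    exact (h1.trans h2).trans h3.le
  have hfinal : ‖x t‖^2 ≤ (Real.exp (-(1/4)*t))^2 := by
    have h4 : C * Real.exp (-(3/4)*t) ≤ Real.exp (t/4) * Real.exp (-(3/4)*t) :=
      mul_le_mul_of_nonneg_right htC (Real.exp_pos _).le
    have h5 : Real.exp (t/4) * Real.exp (-(3/4)*t) = (Real.exp (-(1/4)*t))^2 := by
      rw [sq, ← Real.exp_add, ← Real.exp_add]
      congr 1
      ring
    linarith
  calc ‖x t‖ = Real.sqrt (‖x t‖^2) := (Real.sqrt_sq (norm_nonneg _)).symm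
    _ ≤ Real.sqrt ((Real.exp (-(1/4)*t))^2) := Real.sqrt_le_sqrt hfinal
    _ = Real.exp (-(1/4)*t) := Real.sqrt_sq (Real.exp_pos _).le
end
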